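/- arXiv:math/0409430 — 8 statements merged into one kernel-verified Lean document; each statement's English description precedes it below -/
import Mathlib

section
/- Let d ≥ 1, 0 < β < d and γ > 0. Then for every ξ ∈ ℝ^d, ∫_{ℝ^d} ‖η‖^{β−d} (1 + ‖ξ − η‖²)^{−γ} dη ≤ ∫_{ℝ^d} ‖η‖^{β−d} (1 + ‖η‖²)^{−γ} dη, where both integrals take values in [0,∞]. -/
/-!
Both factors are radially decreasing, so by the layer-cake formula (applied to each factor) each
integral is a double integral over levels `s, t > 0` of the measure of the intersection of two
superlevel sets. These are balls up to the null set `{0}`: centred at `0` for `‖η‖ ^ (β - d)` and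
`(1 + ‖η‖ ^ 2) ^ (-γ)`, and at `ξ` for `(1 + ‖ξ - η‖ ^ 2) ^ (-γ)`. Two balls of radii `r, ρ` meet
in a set of measure at most `min (|B_r|, |B_ρ|) = |B_r ∩ B_ρ|` when both are centred at `0`, and
this is the claim levelwise.
-/

open Real MeasureTheory Set Metric

lemma lintegral_ofReal_mul_eq_lintegral_measure_inter {α : Type*} [MeasurableSpace α]
    (μ : Measure α) {F G : α → ℝ} (hF : Measurable F) (hG : Measurable G)
    (hF0 : 0 ≤ F) (hG0 : 0 ≤ G) :
    ∫⁻ x, ENNReal.ofReal (F x * G x) ∂μ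
      = ∫⁻ s in Ioi 0, ∫⁻ t in Ioi 0, μ ({x | s < F x} ∩ {x | t < G x}) := by
  set ν := μ.withDensity fun x => ENNReal.ofReal (G x)
  calc ∫⁻ x, ENNReal.ofReal (F x * G x) ∂μ = ∫⁻ x, ENNReal.ofReal (F x) ∂ν := by
        rw [lintegral_withDensity_eq_lintegral_mul _ hG.ennreal_ofReal hF.ennreal_ofReal]
        simp only [Pi.mul_apply, ENNReal.ofReal_mul (hF0 _), mul_comm]
    _ = ∫⁻ s in Ioi 0, ∫⁻ x in {x | s < F x}, ENNReal.ofReal (G x) ∂μ := by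
        rw [lintegral_eq_lintegral_meas_lt ν (Filter.Eventually.of_forall hF0) hF.aemeasurable]
        refine lintegral_congr fun s => ?_
        exact withDensity_apply _ (measurableSet_lt measurable_const hF)
    _ = _ := by
        refine lintegral_congr fun s => ?_
        rw [lintegral_eq_lintegral_meas_lt _ (Filter.Eventually.of_forall hG0) hG.aemeasurable]
        refine lintegral_congr fun t => ?_
        rw [Measure.restrict_apply (measurableSet_lt measurable_const hG), inter_comm]

section AddHaar

variable {E : Type*} [NormedAddCommGroup E] [MeasurableSpace E] [BorelSpace E]
  (μ : Measure E) [μ.IsAddHaarMeasure]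

lemma measure_ball_inter_ball_le (x y : E) (r ρ : ℝ) :
    μ (ball x r ∩ ball y ρ) ≤ μ (ball 0 r ∩ ball 0 ρ) := by
  have hmono : Monotone fun r => μ (ball (0 : E) r) := fun _ _ h => measure_mono (ball_subset_ball h)
  calc μ (ball x r ∩ ball y ρ) ≤ min (μ (ball x r)) (μ (ball y ρ)) :=
        le_min (measure_mono inter_subset_left) (measure_mono inter_subset_right)
    _ = μ (ball 0 (min r ρ)) := by
        rw [Measure.addHaar_ball_center μ x, Measure.addHaar_ball_center μ y, hmono.map_min]
    _ = μ (ball 0 r ∩ ball 0 ρ) := by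
        congr 1; ext z; simp

theorem lintegral_mul_comp_sub_le_of_superlevelSets_ae_eq_ball [NormedSpace ℝ E]
    [FiniteDimensional ℝ E] {F G : E → ℝ}
    (hF : Measurable F) (hG : Measurable G) (hF0 : 0 ≤ F) (hG0 : 0 ≤ G)
    (hFball : ∀ s > 0, ∃ r, {x | s < F x} =ᵐ[μ] ball (0 : E) r)
    (hGball : ∀ t > 0, ∃ r, {x | t < G x} =ᵐ[μ] ball (0 : E) r) (ξ : E) :
    ∫⁻ η, ENNReal.ofReal (F η * G (ξ - η)) ∂μ ≤ ∫⁻ η, ENNReal.ofReal (F η * G η) ∂μ := by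
  have hGξ : Measurable fun η => G (ξ - η) := hG.comp (measurable_const.sub measurable_id)
  rw [lintegral_ofReal_mul_eq_lintegral_measure_inter μ hF hG hF0 hG0,
    lintegral_ofReal_mul_eq_lintegral_measure_inter μ hF hGξ hF0 fun η => hG0 (ξ - η)]
  refine setLIntegral_mono' measurableSet_Ioi fun s hs => ?_
  refine setLIntegral_mono' measurableSet_Ioi fun t ht => ?_
  obtain ⟨r, hr⟩ := hFball s hs
  obtain ⟨ρ, hρ⟩ := hGball t ht
  have hρξ : {η | t < G (ξ - η)} =ᵐ[μ] ball ξ ρ := by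
    have hball : (ξ - ·) ⁻¹' ball 0 ρ = ball ξ ρ := by
      ext η; simp [dist_eq_norm, norm_sub_rev]
    rw [← hball]
    exact (Measure.measurePreserving_sub_left μ ξ).quasiMeasurePreserving.preimage_ae_eq hρ
  rw [measure_congr (hr.inter hρξ), measure_congr (hr.inter hρ)]
  exact measure_ball_inter_ball_le μ 0 ξ r ρ

end AddHaar

-- The origin is removed because `(0 : ℝ) ^ c = 0` for `c ≠ 0`.
lemma setOf_lt_norm_rpow_eq_ball_diff {E : Type*} [NormedAddCommGroup E] {c s : ℝ} (hc : c < 0)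
    (hs : 0 < s) : {x : E | s < ‖x‖ ^ c} = ball 0 (s ^ c⁻¹) \ {0} := by
  ext x
  rcases eq_or_ne x 0 with rfl | hx
  · simp [Real.zero_rpow hc.ne, hs.le]
  · simp [hx, Real.lt_rpow_inv_iff_of_neg (norm_pos_iff.mpr hx) hs hc]

lemma setOf_lt_one_add_norm_sq_rpow_eq_ball {E : Type*} [SeminormedAddCommGroup E] {c t : ℝ}
    (hc : c < 0) (ht : 0 < t) :
    {x : E | t < (1 + ‖x‖ ^ 2) ^ c} = ball 0 √(t ^ c⁻¹ - 1) := by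
  ext x
  rw [mem_ofPred_eq, mem_ball_zero_iff, Real.lt_sqrt (norm_nonneg x), lt_sub_iff_add_lt',
    Real.lt_rpow_inv_iff_of_neg (by positivity) ht hc]

theorem stmt_5_general (d : ℕ) (hd : 1 ≤ d) (β γ : ℝ) (hβd : β < d)
    (hγ : 0 < γ) (ξ : EuclideanSpace ℝ (Fin d)) :
    ∫⁻ η : EuclideanSpace ℝ (Fin d),
        ENNReal.ofReal (‖η‖ ^ (β - d) * (1 + ‖ξ - η‖ ^ 2) ^ (-γ))
      ≤ ∫⁻ η : EuclideanSpace ℝ (Fin d),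
        ENNReal.ofReal (‖η‖ ^ (β - d) * (1 + ‖η‖ ^ 2) ^ (-γ)) := by
  -- makes the space nontrivial, hence `{0}` Lebesgue-null
  have : Nonempty (Fin d) := ⟨⟨0, hd⟩⟩
  refine lintegral_mul_comp_sub_le_of_superlevelSets_ae_eq_ball volume (by fun_prop) (by fun_prop)
    (fun η => by positivity) (fun x => by positivity) (fun s hs => ?_) (fun t ht => ?_) ξ
  · rw [setOf_lt_norm_rpow_eq_ball_diff (by linarith) hs]
    exact ⟨_, sdiff_null_ae_eq_self (measure_singleton 0)⟩
  · rw [setOf_lt_one_add_norm_sq_rpow_eq_ball (by linarith) ht]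
    exact ⟨_, .rfl⟩

theorem stmt_5 (d : ℕ) (hd : 1 ≤ d) (β γ : ℝ) (hβ0 : 0 < β) (hβd : β < d)
    (hγ : 0 < γ) (ξ : EuclideanSpace ℝ (Fin d)) :
    ∫⁻ η : EuclideanSpace ℝ (Fin d),
        ENNReal.ofReal (‖η‖ ^ (β - d) * (1 + ‖ξ - η‖ ^ 2) ^ (-γ))
      ≤ ∫⁻ η : EuclideanSpace ℝ (Fin d),
        ENNReal.ofReal (‖η‖ ^ (β - d) * (1 + ‖η‖ ^ 2) ^ (-γ)) :=
  stmt_5_general d hd β γ hβd hγ ξ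
end

section
/- Let k > 0, 0 ≤ α < k, T ≥ 0, and let 0 < β < d with β < 2(k − α). Then there is a finite constant C such that for every s ∈ [0,T] and every ξ ∈ ℝ^d, ∫_{ℝ^d} ‖η‖^{β−d} (1 + ‖ξ − η‖²)^{α} (sin(s‖ξ − η‖^k))² / ‖ξ − η‖^{2k} dη ≤ C. -/
open Real MeasureTheory Set Metric
open scoped ENNReal

open Real MeasureTheory

/-- Core pointwise bound. -/
lemma aux_core6 {k α T p : ℝ} (hk : 0 < k) (hα0 : 0 ≤ α) (hαk : α < k) {s : ℝ}
    (hs0 : 0 ≤ s) (hsT : s ≤ T) (hp : p < 0) {b r : ℝ} (hb : 0 ≤ b) (hr : 0 ≤ r)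
    (hbr : b ≤ r) :
    b ^ p * (1 + r ^ 2) ^ α * Real.sin (s * r ^ k) ^ 2 / r ^ (2 * k) ≤
      (2 ^ k * max 1 (T ^ 2)) * min (b ^ p) (b ^ (p + 2 * (α - k))) := by
  have hT : 0 ≤ T := hs0.trans hsT
  have hq : p + 2 * (α - k) < 0 := by nlinarith
  rcases eq_or_lt_of_le hr with hr0 | hr0
  · -- r = 0
    have hb0 : b = 0 := le_antisymm (hr0 ▸ hbr) hb
    rw [← hr0, hb0]
    rw [Real.zero_rpow hp.ne, Real.zero_rpow hk.ne', mul_zero, Real.sin_zero]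
    simp [Real.zero_rpow hq.ne]
  · -- r > 0
    have h1r : (0:ℝ) < 1 + r ^ 2 := by positivity
    have hr2k : (0:ℝ) < r ^ (2 * k) := Real.rpow_pos_of_pos hr0 _
    have hbp : 0 ≤ b ^ p := Real.rpow_nonneg hb p
    -- sin² bound
    have hsin : Real.sin (s * r ^ k) ^ 2 ≤ min 1 (T ^ 2 * r ^ (2 * k)) := by
      refine le_min (Real.sin_sq_le_one _) ?_
      calc Real.sin (s * r ^ k) ^ 2 ≤ (s * r ^ k) ^ 2 := Real.sin_sq_le_sq
        _ = s ^ 2 * (r ^ k) ^ 2 := by ring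
        _ ≤ T ^ 2 * (r ^ k) ^ 2 := by gcongr
        _ = T ^ 2 * r ^ (2 * k) := by
            rw [← Real.rpow_natCast (r ^ k) 2, ← Real.rpow_mul hr]
            norm_num [mul_comm]
    have step1 : b ^ p * (1 + r ^ 2) ^ α * Real.sin (s * r ^ k) ^ 2 / r ^ (2 * k) ≤
        b ^ p * (1 + r ^ 2) ^ α * min (r ^ (-(2 * k))) (T ^ 2) := by
      rw [div_le_iff₀ hr2k]
      have hmin : min (r ^ (-(2 * k))) (T ^ 2) * r ^ (2 * k) = min 1 (T ^ 2 * r ^ (2 * k)) := by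
        rw [min_mul_of_nonneg _ _ hr2k.le, Real.rpow_neg hr, inv_mul_cancel₀ hr2k.ne']
      rw [mul_assoc (b ^ p * (1 + r ^ 2) ^ α), hmin]
      gcongr
    have step2 : min (r ^ (-(2 * k))) (T ^ 2) ≤ 2 ^ k * max 1 (T ^ 2) * (1 + r ^ 2) ^ (-k) := by
      rcases le_total r 1 with h | h
      · have h2 : (1:ℝ) ≤ 2 / (1 + r ^ 2) := by
          rw [le_div_iff₀ h1r]; nlinarith
        have : (1:ℝ) ≤ (2 / (1 + r ^ 2)) ^ k := Real.one_le_rpow h2 hk.le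
        have hdr : (2 / (1 + r ^ 2)) ^ k = 2 ^ k * (1 + r ^ 2) ^ (-k) := by
          rw [Real.div_rpow (by norm_num) h1r.le, Real.rpow_neg h1r.le, div_eq_mul_inv]
        calc min (r ^ (-(2 * k))) (T ^ 2) ≤ T ^ 2 := min_le_right _ _
          _ ≤ max 1 (T ^ 2) * 1 := by rw [mul_one]; exact le_max_right _ _
          _ ≤ max 1 (T ^ 2) * (2 ^ k * (1 + r ^ 2) ^ (-k)) := by
              rw [← hdr, mul_one]
              exact le_mul_of_one_le_right (le_trans zero_le_one (le_max_left _ _)) this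
          _ = 2 ^ k * max 1 (T ^ 2) * (1 + r ^ 2) ^ (-k) := by ring
      · have key : r ^ (-(2 * k)) ≤ 2 ^ k * (1 + r ^ 2) ^ (-k) := by
          have e1 : r ^ (-(2 * k)) = (r ^ 2)⁻¹ ^ k := by
            rw [← Real.rpow_natCast r 2, ← Real.rpow_neg hr, ← Real.rpow_mul hr]
            congr 1
            push_cast
            ring
          have e2 : 2 ^ k * (1 + r ^ 2) ^ (-k) = (2 / (1 + r ^ 2)) ^ k := by
            rw [Real.div_rpow (by norm_num) h1r.le, Real.rpow_neg h1r.le, div_eq_mul_inv]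
          rw [e1, e2]
          apply Real.rpow_le_rpow (by positivity) _ hk.le
          rw [inv_eq_one_div, div_le_div_iff₀ (by positivity) h1r]
          nlinarith
        calc min (r ^ (-(2 * k))) (T ^ 2) ≤ r ^ (-(2 * k)) := min_le_left _ _
          _ ≤ 2 ^ k * (1 + r ^ 2) ^ (-k) := key
          _ ≤ 2 ^ k * max 1 (T ^ 2) * (1 + r ^ 2) ^ (-k) := by
              have h1 : (1:ℝ) ≤ max 1 (T ^ 2) := le_max_left _ _
              have h2 : (0:ℝ) ≤ (1 + r ^ 2) ^ (-k) := Real.rpow_nonneg h1r.le _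
              have h3 : (0:ℝ) ≤ (2:ℝ) ^ k := Real.rpow_nonneg (by norm_num) _
              nlinarith [mul_nonneg (mul_nonneg h3 (by linarith : (0:ℝ) ≤ max 1 (T ^ 2) - 1)) h2]
    have step3 : b ^ p * ((1 + r ^ 2) ^ α * (1 + r ^ 2) ^ (-k)) ≤
        min (b ^ p) (b ^ (p + 2 * (α - k))) := by
      rw [← Real.rpow_add h1r]
      refine le_min ?_ ?_
      · calc b ^ p * (1 + r ^ 2) ^ (α + -k) ≤ b ^ p * 1 := by
              gcongr
              exact Real.rpow_le_one_of_one_le_of_nonpos (by nlinarith) (by linarith)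
          _ = b ^ p := mul_one _
      · rcases eq_or_lt_of_le hb with hb0 | hb0
        · rw [← hb0, Real.zero_rpow hp.ne, Real.zero_rpow hq.ne, zero_mul]
        · have h1 : (1 + r ^ 2) ^ (α + -k) ≤ (b ^ 2) ^ (α + -k) := by
            apply Real.rpow_le_rpow_of_nonpos (by positivity) (by nlinarith) (by linarith)
          calc b ^ p * (1 + r ^ 2) ^ (α + -k) ≤ b ^ p * (b ^ 2) ^ (α + -k) := by gcongr
            _ = b ^ (p + 2 * (α - k)) := by
                rw [← Real.rpow_natCast b 2, ← Real.rpow_mul hb, ← Real.rpow_add hb0]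
                congr 1 <;> push_cast <;> ring
    calc b ^ p * (1 + r ^ 2) ^ α * Real.sin (s * r ^ k) ^ 2 / r ^ (2 * k) ≤
        b ^ p * (1 + r ^ 2) ^ α * min (r ^ (-(2 * k))) (T ^ 2) := step1
      _ ≤ b ^ p * (1 + r ^ 2) ^ α * (2 ^ k * max 1 (T ^ 2) * (1 + r ^ 2) ^ (-k)) := by
          gcongr
      _ = (2 ^ k * max 1 (T ^ 2)) * (b ^ p * ((1 + r ^ 2) ^ α * (1 + r ^ 2) ^ (-k))) := by ring
      _ ≤ (2 ^ k * max 1 (T ^ 2)) * min (b ^ p) (b ^ (p + 2 * (α - k))) := by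
          gcongr


lemma aux_fin6 (d : ℕ) (hd : 1 ≤ d) (p q : ℝ) (hp1 : -(d:ℝ) < p) (hp0 : p < 0)
    (hq : q < -(d:ℝ)) :
    ∫⁻ x : EuclideanSpace ℝ (Fin d),
      ENNReal.ofReal (min (‖x‖ ^ p) (‖x‖ ^ q)) < ∞ := by
  have hd0 : (0:ℝ) < d := by exact_mod_cast hd
  have hq0 : q < 0 := by linarith
  have hg_nn : ∀ x : EuclideanSpace ℝ (Fin d), 0 ≤ min (‖x‖ ^ p) (‖x‖ ^ q) := fun x =>
    le_min (Real.rpow_nonneg (norm_nonneg _) _) (Real.rpow_nonneg (norm_nonneg _) _)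
  have hg_meas : Measurable fun x : EuclideanSpace ℝ (Fin d) =>
      min (‖x‖ ^ p) (‖x‖ ^ q) := by fun_prop
  rw [lintegral_eq_lintegral_meas_le volume (Filter.Eventually.of_forall hg_nn)
    hg_meas.aemeasurable]
  -- superlevel sets are contained in balls
  have hsub : ∀ t : ℝ, 0 < t → ∀ e : ℝ, e < 0 → (e = p ∨ e = q) →
      {a : EuclideanSpace ℝ (Fin d) | t ≤ min (‖a‖ ^ p) (‖a‖ ^ q)} ⊆
        closedBall 0 (t ^ e⁻¹) := by
    intro t ht e he hepq a ha
    have hae : t ≤ ‖a‖ ^ e := by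
      rcases hepq with rfl | rfl
      · exact le_trans ha (min_le_left _ _)
      · exact le_trans ha (min_le_right _ _)
    have ha0 : 0 < ‖a‖ := by
      rcases eq_or_lt_of_le (norm_nonneg a) with h0 | h0
      · exfalso
        rw [← h0, Real.zero_rpow he.ne] at hae
        exact absurd (ht.trans_le hae) (lt_irrefl 0)
      · exact h0
    rw [mem_closedBall_zero_iff]
    exact (Real.le_rpow_inv_iff_of_neg ha0 ht he).mpr hae
  have hvol : ∀ t : ℝ, 0 < t → ∀ e : ℝ, e < 0 → (e = p ∨ e = q) →
      volume {a : EuclideanSpace ℝ (Fin d) | t ≤ min (‖a‖ ^ p) (‖a‖ ^ q)} ≤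
        ENNReal.ofReal (t ^ (e⁻¹ * d)) * volume (ball (0 : EuclideanSpace ℝ (Fin d)) 1) := by
    intro t ht e he hepq
    refine (measure_mono (hsub t ht e he hepq)).trans_eq ?_
    rw [Measure.addHaar_closedBall _ _ (Real.rpow_nonneg ht.le _)]
    congr 2
    rw [finrank_euclideanSpace_fin, ← Real.rpow_natCast (t ^ e⁻¹) d, ← Real.rpow_mul ht.le]
  have hB : volume (ball (0 : EuclideanSpace ℝ (Fin d)) 1) ≠ ∞ := measure_ball_lt_top.ne
  rw [← Ioc_union_Ioi_eq_Ioi (zero_le_one' ℝ),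
    lintegral_union measurableSet_Ioi (Ioc_disjoint_Ioi le_rfl)]
  have fin1 : (∫⁻ t in Ioc (0:ℝ) 1,
      volume {a : EuclideanSpace ℝ (Fin d) | t ≤ min (‖a‖ ^ p) (‖a‖ ^ q)}) < ∞ := by
    have hexp : -1 < q⁻¹ * d := by
      have h1 : (0:ℝ) < -q := by linarith
      have h2 : (-q)⁻¹ * d < 1 := by
        rw [inv_mul_lt_iff₀ h1, mul_one]; linarith
      have h3 : q⁻¹ * d = -((-q)⁻¹ * d) := by
        rw [inv_neg]; ring
      rw [h3]; linarith
    calc (∫⁻ t in Ioc (0:ℝ) 1,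
          volume {a : EuclideanSpace ℝ (Fin d) | t ≤ min (‖a‖ ^ p) (‖a‖ ^ q)})
        ≤ ∫⁻ t in Ioc (0:ℝ) 1, ENNReal.ofReal (t ^ (q⁻¹ * d)) *
            volume (ball (0 : EuclideanSpace ℝ (Fin d)) 1) := by
          refine setLIntegral_mono' measurableSet_Ioc fun t ht => ?_
          exact hvol t ht.1 q hq0 (Or.inr rfl)
      _ = (∫⁻ t in Ioc (0:ℝ) 1, ENNReal.ofReal (t ^ (q⁻¹ * d))) *
            volume (ball (0 : EuclideanSpace ℝ (Fin d)) 1) :=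
          lintegral_mul_const' _ _ hB
      _ < ∞ := by
          refine ENNReal.mul_lt_top ?_ measure_ball_lt_top
          refine IntegrableOn.setLIntegral_lt_top ?_
          rw [← intervalIntegrable_iff_integrableOn_Ioc_of_le zero_le_one]
          exact intervalIntegral.intervalIntegrable_rpow' hexp
  have fin2 : (∫⁻ t in Ioi (1:ℝ),
      volume {a : EuclideanSpace ℝ (Fin d) | t ≤ min (‖a‖ ^ p) (‖a‖ ^ q)}) < ∞ := by
    have hexp : p⁻¹ * d < -1 := by
      have h1 : (0:ℝ) < -p := by linarith
      have h2 : (1:ℝ) < (-p)⁻¹ * d := by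
        rw [lt_inv_mul_iff₀ h1, mul_one]; linarith
      have h3 : p⁻¹ * d = -((-p)⁻¹ * d) := by
        rw [inv_neg]; ring
      rw [h3]; linarith
    calc (∫⁻ t in Ioi (1:ℝ),
          volume {a : EuclideanSpace ℝ (Fin d) | t ≤ min (‖a‖ ^ p) (‖a‖ ^ q)})
        ≤ ∫⁻ t in Ioi (1:ℝ), ENNReal.ofReal (t ^ (p⁻¹ * d)) *
            volume (ball (0 : EuclideanSpace ℝ (Fin d)) 1) := by
          refine setLIntegral_mono' measurableSet_Ioi fun t ht => ?_
          exact hvol t (lt_trans one_pos ht) p hp0 (Or.inl rfl)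
      _ = (∫⁻ t in Ioi (1:ℝ), ENNReal.ofReal (t ^ (p⁻¹ * d))) *
            volume (ball (0 : EuclideanSpace ℝ (Fin d)) 1) :=
          lintegral_mul_const' _ _ hB
      _ < ∞ := by
          refine ENNReal.mul_lt_top ?_ measure_ball_lt_top
          exact IntegrableOn.setLIntegral_lt_top
            (integrableOn_Ioi_rpow_of_lt hexp one_pos)
  exact ENNReal.add_lt_top.mpr ⟨fin1, fin2⟩

theorem stmt_6 (d : ℕ) (hd : 1 ≤ d) (k α T β : ℝ) (hk : 0 < k) (hα0 : 0 ≤ α)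
    (hαk : α < k) (hT : 0 ≤ T) (hβ0 : 0 < β) (hβd : β < d)
    (hβ : β < 2 * (k - α)) :
    ∃ C : ℝ, ∀ s ∈ Set.Icc (0 : ℝ) T, ∀ ξ : EuclideanSpace ℝ (Fin d),
      ∫⁻ η : EuclideanSpace ℝ (Fin d),
          ENNReal.ofReal (‖η‖ ^ (β - d) * (1 + ‖ξ - η‖ ^ 2) ^ α *
            Real.sin (s * ‖ξ - η‖ ^ k) ^ 2 / ‖ξ - η‖ ^ (2 * k))
        ≤ ENNReal.ofReal C := by
  set p : ℝ := β - d with hpdef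
  set q : ℝ := p + 2 * (α - k) with hqdef
  have hp0 : p < 0 := by simp only [hpdef]; linarith
  have hp1 : -(d:ℝ) < p := by simp only [hpdef]; linarith
  have hqd : q < -(d:ℝ) := by simp only [hqdef, hpdef]; linarith
  set M : ℝ := 2 ^ k * max 1 (T ^ 2) with hMdef
  have hM : 0 ≤ M := by positivity
  set I : ℝ≥0∞ := ∫⁻ x : EuclideanSpace ℝ (Fin d),
      ENNReal.ofReal (min (‖x‖ ^ p) (‖x‖ ^ q)) with hIdef
  have hI : I < ∞ := aux_fin6 d hd p q hp1 hp0 hqd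
  have hV : 2 * (ENNReal.ofReal M * I) ≠ ∞ :=
    (ENNReal.mul_lt_top (by norm_num)
      (ENNReal.mul_lt_top ENNReal.ofReal_lt_top hI)).ne
  refine ⟨(2 * (ENNReal.ofReal M * I)).toReal, fun s hs ξ => ?_⟩
  rw [ENNReal.ofReal_toReal hV]
  set P : EuclideanSpace ℝ (Fin d) → ℝ≥0∞ := fun x =>
    ENNReal.ofReal (M * min (‖x‖ ^ p) (‖x‖ ^ q)) with hPdef
  have hPmeas : Measurable P := by
    apply Measurable.ennreal_ofReal
    fun_prop
  have hPnn : ∀ x : EuclideanSpace ℝ (Fin d), 0 ≤ M * min (‖x‖ ^ p) (‖x‖ ^ q) := fun x =>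
    mul_nonneg hM (le_min (Real.rpow_nonneg (norm_nonneg _) _)
      (Real.rpow_nonneg (norm_nonneg _) _))
  -- pointwise bound
  have hpoint : ∀ η : EuclideanSpace ℝ (Fin d),
      ENNReal.ofReal (‖η‖ ^ (β - ↑d) * (1 + ‖ξ - η‖ ^ 2) ^ α *
          Real.sin (s * ‖ξ - η‖ ^ k) ^ 2 / ‖ξ - η‖ ^ (2 * k)) ≤ P η + P (ξ - η) := by
    intro η
    have hreal : ‖η‖ ^ (β - ↑d) * (1 + ‖ξ - η‖ ^ 2) ^ α *
        Real.sin (s * ‖ξ - η‖ ^ k) ^ 2 / ‖ξ - η‖ ^ (2 * k) ≤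
        M * min (‖η‖ ^ p) (‖η‖ ^ q) + M * min (‖ξ - η‖ ^ p) (‖ξ - η‖ ^ q) := by
      rcases le_total ‖η‖ ‖ξ - η‖ with hcase | hcase
      · have h1 := aux_core6 hk hα0 hαk hs.1 hs.2 hp0 (norm_nonneg η) (norm_nonneg (ξ - η))
          hcase
        have h2 := hPnn (ξ - η)
        simp only [hqdef, hpdef, hMdef] at h1 h2 ⊢
        linarith
      · rcases eq_or_lt_of_le (norm_nonneg (ξ - η)) with hr0 | hr0
        · have hzero : ‖η‖ ^ (β - ↑d) * (1 + ‖ξ - η‖ ^ 2) ^ α *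
              Real.sin (s * ‖ξ - η‖ ^ k) ^ 2 / ‖ξ - η‖ ^ (2 * k) = 0 := by
            rw [← hr0, Real.zero_rpow hk.ne', mul_zero, Real.sin_zero]
            norm_num
          rw [hzero]
          exact add_nonneg (hPnn η) (hPnn (ξ - η))
        · have hmono : ‖η‖ ^ p ≤ ‖ξ - η‖ ^ p :=
            Real.rpow_le_rpow_of_nonpos hr0 hcase hp0.le
          have hC : (0:ℝ) < ‖ξ - η‖ ^ (2 * k) := Real.rpow_pos_of_pos hr0 _
          have hstep : ‖η‖ ^ (β - ↑d) * (1 + ‖ξ - η‖ ^ 2) ^ α *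
              Real.sin (s * ‖ξ - η‖ ^ k) ^ 2 / ‖ξ - η‖ ^ (2 * k) ≤
              ‖ξ - η‖ ^ (β - ↑d) * (1 + ‖ξ - η‖ ^ 2) ^ α *
              Real.sin (s * ‖ξ - η‖ ^ k) ^ 2 / ‖ξ - η‖ ^ (2 * k) := by
            refine div_le_div_of_nonneg_right ?_ hC.le
            simp only [hpdef] at hmono
            gcongr
          have h1 := aux_core6 hk hα0 hαk hs.1 hs.2 hp0 (norm_nonneg (ξ - η))
            (norm_nonneg (ξ - η)) le_rfl
          have h2 := hPnn η
          simp only [hqdef, hpdef, hMdef] at h1 h2 hstep ⊢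
          linarith
    calc ENNReal.ofReal (‖η‖ ^ (β - ↑d) * (1 + ‖ξ - η‖ ^ 2) ^ α *
          Real.sin (s * ‖ξ - η‖ ^ k) ^ 2 / ‖ξ - η‖ ^ (2 * k))
        ≤ ENNReal.ofReal (M * min (‖η‖ ^ p) (‖η‖ ^ q) +
            M * min (‖ξ - η‖ ^ p) (‖ξ - η‖ ^ q)) := ENNReal.ofReal_le_ofReal hreal
      _ ≤ P η + P (ξ - η) := ENNReal.ofReal_add_le
  calc ∫⁻ η : EuclideanSpace ℝ (Fin d),
        ENNReal.ofReal (‖η‖ ^ (β - ↑d) * (1 + ‖ξ - η‖ ^ 2) ^ α *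
          Real.sin (s * ‖ξ - η‖ ^ k) ^ 2 / ‖ξ - η‖ ^ (2 * k))
      ≤ ∫⁻ η, (P η + P (ξ - η)) := lintegral_mono hpoint
    _ = (∫⁻ η, P η) + ∫⁻ η, P (ξ - η) := lintegral_add_left hPmeas _
    _ = (∫⁻ η, P η) + ∫⁻ η, P η := by
        congr 1
        exact (Measure.measurePreserving_sub_left volume ξ).lintegral_comp hPmeas
    _ = 2 * ∫⁻ η, P η := (two_mul _).symm
    _ = 2 * (ENNReal.ofReal M * I) := by
        rw [hIdef]
        congr 1
        rw [← lintegral_const_mul' _ _ ENNReal.ofReal_ne_top]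
        congr 1
        funext x
        exact ENNReal.ofReal_mul hM
end

section
/- Let k > 0, α ≥ 0, η ∈ (α/k, 1), T ≥ 0, and let 0 < β < d with β < 2(kη − α). Then there is a finite constant C such that for all 0 ≤ t₁ ≤ t₂ ≤ T and every ξ ∈ ℝ^d, ∫_{ℝ^d} ‖ζ‖^{β−d} (1 + ‖ξ − ζ‖²)^{α} (sin(t₂‖ξ − ζ‖^k) − sin(t₁‖ξ − ζ‖^k))² / ‖ξ − ζ‖^{2k} dζ ≤ C (t₂ − t₁)^{2(1−η)}. -/
/-!
Write `r = ‖ξ - ζ‖` and `Δ = t₂ - t₁`. The sine difference is bounded both by `Δ r^k` and by `2`,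
hence by `2 (Δ r^k)^(1-η)`. The first bound handles `r ≤ 1`, the second `r ≥ 1`, and together
they dominate the multiplier `(1 + r²)^α (sin t₂r^k - sin t₁r^k)² / r^(2k)` by
`C Δ^(2(1-η)) (1 + r)^(-γ)` with `γ = 2(kη - α) > β`. Then `‖ζ‖^(β-d) (1 + ‖ξ - ζ‖)^(-γ)` is at
most a multiple of the integrable singularity `‖ζ‖^(β-d)` on the unit ball plus the translates of
`(1 + ‖·‖)^(β-d-γ)` centred at `0` and at `ξ`, whose integral does not depend on `ξ`.
-/

open Real MeasureTheory Metric Set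
open scoped ENNReal

namespace Real

lemma min_le_rpow_mul_rpow {a b θ : ℝ} (ha : 0 ≤ a) (hb : 0 ≤ b) (hθ₀ : 0 ≤ θ) (hθ₁ : θ ≤ 1) :
    min a b ≤ a ^ θ * b ^ (1 - θ) := by
  have hm : 0 ≤ min a b := le_min ha hb
  calc min a b = min a b ^ θ * min a b ^ (1 - θ) := by
        rw [← rpow_add' hm (by simp), add_sub_cancel, rpow_one]
    _ ≤ a ^ θ * b ^ (1 - θ) := by
        gcongr
        exacts [min_le_left a b, min_le_right a b]

lemma sq_sin_sub_sin_le_rpow {η : ℝ} (hη₀ : 0 ≤ η) (hη₁ : η ≤ 1) (x y : ℝ) :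
    (sin x - sin y) ^ 2 ≤ 4 * |x - y| ^ (2 * (1 - η)) := by
  have hsin : |sin x - sin y| ≤ 2 * |x - y| ^ (1 - η) :=
    calc |sin x - sin y| ≤ min 2 |x - y| := by
          refine le_min ?_ (abs_sin_sub_sin_le x y)
          linarith [abs_sub (sin x) (sin y), abs_sin_le_one x, abs_sin_le_one y]
      _ ≤ 2 ^ η * |x - y| ^ (1 - η) :=
          min_le_rpow_mul_rpow zero_le_two (abs_nonneg _) hη₀ hη₁
      _ ≤ 2 * |x - y| ^ (1 - η) := by
          gcongr
          exact rpow_le_self_of_one_le one_le_two hη₁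
  calc (sin x - sin y) ^ 2 = |sin x - sin y| ^ 2 := (sq_abs _).symm
    _ ≤ (2 * |x - y| ^ (1 - η)) ^ 2 := by gcongr
    _ = 4 * |x - y| ^ (2 * (1 - η)) := by
        rw [mul_pow, ← rpow_natCast (_ ^ _), ← rpow_mul (abs_nonneg _)]
        norm_num [mul_comm]

lemma one_le_two_rpow_mul_one_add_rpow_neg {r γ : ℝ} (hr₀ : 0 ≤ r) (hr₁ : r ≤ 1) (hγ : 0 ≤ γ) :
    1 ≤ 2 ^ γ * (1 + r) ^ (-γ) := by
  rw [rpow_neg (by positivity), ← div_eq_mul_inv, one_le_div (by positivity)]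
  gcongr
  linarith

lemma rpow_neg_le_two_rpow_mul_one_add_rpow_neg {r γ : ℝ} (hr : 1 ≤ r) (hγ : 0 ≤ γ) :
    r ^ (-γ) ≤ 2 ^ γ * (1 + r) ^ (-γ) := by
  have hr₀ : 0 < r := by linarith
  rw [rpow_neg hr₀.le, rpow_neg (by positivity), ← div_eq_mul_inv,
    le_div_iff₀ (by positivity), ← div_eq_inv_mul, div_le_iff₀ (by positivity),
    ← mul_rpow zero_le_two hr₀.le]
  gcongr
  linarith

lemma rpow_mul_rpow_le_rpow_add_add_rpow_add {a b x y : ℝ} (ha : 0 < a) (hb : 0 < b)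
    (hx : x ≤ 0) (hy : y ≤ 0) :
    a ^ x * b ^ y ≤ a ^ (x + y) + b ^ (x + y) := by
  rcases le_total a b with hab | hba
  · calc a ^ x * b ^ y ≤ a ^ x * a ^ y :=
          mul_le_mul_of_nonneg_left (rpow_le_rpow_of_nonpos ha hab hy) (by positivity)
      _ = a ^ (x + y) := (rpow_add ha x y).symm
      _ ≤ _ := le_add_of_nonneg_right (by positivity)
  · calc a ^ x * b ^ y ≤ b ^ x * b ^ y :=
          mul_le_mul_of_nonneg_right (rpow_le_rpow_of_nonpos hb hba hx) (by positivity)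
      _ = b ^ (x + y) := (rpow_add hb x y).symm
      _ ≤ _ := le_add_of_nonneg_left (by positivity)

lemma rpow_mul_one_add_rpow_neg_le {s r c γ : ℝ} (hs : 0 ≤ s) (hr : 0 ≤ r) (hc : c ≤ 0)
    (hγ : 0 ≤ γ) :
    s ^ c * (1 + r) ^ (-γ)
      ≤ 2 ^ (-c) * ((if s < 1 then s ^ c else 0) + (1 + s) ^ (c - γ) + (1 + r) ^ (c - γ)) := by
  have h2c : 1 ≤ (2 : ℝ) ^ (-c) := one_le_rpow one_le_two (by linarith)
  split_ifs with hs₁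
  · calc s ^ c * (1 + r) ^ (-γ) ≤ s ^ c * 1 := by
          gcongr
          exact rpow_le_one_of_one_le_of_nonpos (by linarith) (by linarith)
      _ ≤ s ^ c + (1 + s) ^ (c - γ) + (1 + r) ^ (c - γ) := by
          rw [mul_one, add_assoc]
          exact le_add_of_nonneg_right (by positivity)
      _ ≤ _ := le_mul_of_one_le_left (by positivity) h2c
  · have hs' : s ^ c ≤ 2 ^ (-c) * (1 + s) ^ c := by
      simpa using rpow_neg_le_two_rpow_mul_one_add_rpow_neg (not_lt.1 hs₁) (neg_nonneg.2 hc)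
    calc s ^ c * (1 + r) ^ (-γ) ≤ 2 ^ (-c) * ((1 + s) ^ c * (1 + r) ^ (-γ)) := by
          rw [← mul_assoc]; gcongr
      _ ≤ 2 ^ (-c) * (0 + (1 + s) ^ (c - γ) + (1 + r) ^ (c - γ)) := by
          rw [zero_add, sub_eq_add_neg]
          gcongr
          exact rpow_mul_rpow_le_rpow_add_add_rpow_add (by positivity) (by positivity) hc
            (by linarith)

lemma one_add_sq_rpow_mul_sq_sin_sub_div_le_of_le_one {k α η T t₁ t₂ r : ℝ} (hα : 0 ≤ α)
    (hη₀ : 0 ≤ η) (ht : t₁ ≤ t₂) (hT : t₂ - t₁ ≤ T) (hr₀ : 0 ≤ r) (hr₁ : r ≤ 1) :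
    (1 + r ^ 2) ^ α * (sin (t₂ * r ^ k) - sin (t₁ * r ^ k)) ^ 2 / r ^ (2 * k)
      ≤ 2 ^ α * T ^ (2 * η) * (t₂ - t₁) ^ (2 * (1 - η)) := by
  set Δ := t₂ - t₁
  have hΔ : 0 ≤ Δ := sub_nonneg.2 ht
  have hsin : (sin (t₂ * r ^ k) - sin (t₁ * r ^ k)) ^ 2 ≤ Δ ^ 2 * r ^ (2 * k) :=
    calc _ ≤ (t₂ * r ^ k - t₁ * r ^ k) ^ 2 := sq_le_sq.2 (by simpa using abs_sin_sub_sin_le _ _)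
      _ = Δ ^ 2 * r ^ (2 * k) := by
          rw [← sub_mul, mul_pow, ← rpow_natCast (r ^ k), ← rpow_mul hr₀]
          norm_num [Δ, mul_comm]
  have hΔsq : Δ ^ 2 ≤ T ^ (2 * η) * Δ ^ (2 * (1 - η)) :=
    calc Δ ^ 2 = Δ ^ (2 * η) * Δ ^ (2 * (1 - η)) := by
          rw [← rpow_add' hΔ (by ring_nf; norm_num)]
          ring_nf
          norm_cast
      _ ≤ _ := by gcongr
  have hweight : (1 + r ^ 2) ^ α ≤ 2 ^ α := by
    gcongr
    nlinarith
  calc _ ≤ 2 ^ α * Δ ^ 2 := by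
        rw [mul_div_assoc]
        gcongr
        exact div_le_of_le_mul₀ (by positivity) (by positivity) hsin
    _ ≤ _ := by
        rw [mul_assoc]
        gcongr

lemma one_add_sq_rpow_mul_sq_sin_sub_div_le_of_one_le {k α η t₁ t₂ r : ℝ} (hα : 0 ≤ α)
    (hη₀ : 0 ≤ η) (hη₁ : η ≤ 1) (ht : t₁ ≤ t₂) (hr : 1 ≤ r) :
    (1 + r ^ 2) ^ α * (sin (t₂ * r ^ k) - sin (t₁ * r ^ k)) ^ 2 / r ^ (2 * k)
      ≤ 2 ^ α * 4 * (t₂ - t₁) ^ (2 * (1 - η)) * r ^ (-(2 * (k * η - α))) := by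
  have hr₀ : 0 < r := by linarith
  set Δ := t₂ - t₁
  have hΔ : 0 ≤ Δ := sub_nonneg.2 ht
  set e := 2 * (1 - η)
  have hsin : (sin (t₂ * r ^ k) - sin (t₁ * r ^ k)) ^ 2 ≤ 4 * Δ ^ e * r ^ (k * e) :=
    calc _ ≤ 4 * |t₂ * r ^ k - t₁ * r ^ k| ^ e := sq_sin_sub_sin_le_rpow hη₀ hη₁ _ _
      _ = _ := by
          rw [← sub_mul, abs_of_nonneg (by positivity), mul_rpow hΔ (by positivity),
            ← rpow_mul hr₀.le, mul_assoc]
  have hweight : (1 + r ^ 2) ^ α ≤ 2 ^ α * r ^ (2 * α) :=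
    calc _ ≤ (2 * r ^ 2) ^ α := by
          gcongr
          nlinarith
      _ = _ := by
          rw [mul_rpow zero_le_two (by positivity), ← rpow_natCast, ← rpow_mul hr₀.le]
          norm_num
  calc _ ≤ 2 ^ α * r ^ (2 * α) * (4 * Δ ^ e * r ^ (k * e)) / r ^ (2 * k) := by gcongr
    _ = _ := by
        rw [show -(2 * (k * η - α)) = 2 * α + k * e - 2 * k by ring, rpow_sub hr₀, rpow_add hr₀]
        ring

lemma one_add_sq_rpow_mul_sq_sin_sub_div_le {k α η T t₁ t₂ r : ℝ} (hα : 0 ≤ α) (hη₀ : 0 ≤ η)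
    (hη₁ : η ≤ 1) (hαη : α ≤ k * η) (ht : t₁ ≤ t₂) (hT : t₂ - t₁ ≤ T) (hr : 0 ≤ r) :
    (1 + r ^ 2) ^ α * (sin (t₂ * r ^ k) - sin (t₁ * r ^ k)) ^ 2 / r ^ (2 * k)
      ≤ 2 ^ (α + 2 * (k * η - α)) * max (T ^ (2 * η)) 4 * (t₂ - t₁) ^ (2 * (1 - η))
        * (1 + r) ^ (-(2 * (k * η - α))) := by
  set γ := 2 * (k * η - α)
  have hγ : 0 ≤ γ := by linarith
  have hΔ : 0 ≤ (t₂ - t₁) ^ (2 * (1 - η)) := rpow_nonneg (sub_nonneg.2 ht) _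
  rw [rpow_add two_pos]
  rcases le_total r 1 with hr₁ | hr₁
  · calc _ ≤ 2 ^ α * T ^ (2 * η) * (t₂ - t₁) ^ (2 * (1 - η)) * 1 := by
          rw [mul_one]
          exact one_add_sq_rpow_mul_sq_sin_sub_div_le_of_le_one hα hη₀ ht hT hr hr₁
      _ ≤ 2 ^ α * max (T ^ (2 * η)) 4 * (t₂ - t₁) ^ (2 * (1 - η))
            * (2 ^ γ * (1 + r) ^ (-γ)) := by
          gcongr
          exacts [le_max_left _ _, one_le_two_rpow_mul_one_add_rpow_neg hr hr₁ hγ]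
      _ = _ := by ring
  · calc _ ≤ 2 ^ α * 4 * (t₂ - t₁) ^ (2 * (1 - η)) * r ^ (-γ) :=
          one_add_sq_rpow_mul_sq_sin_sub_div_le_of_one_le hα hη₀ hη₁ ht hr₁
      _ ≤ 2 ^ α * max (T ^ (2 * η)) 4 * (t₂ - t₁) ^ (2 * (1 - η))
            * (2 ^ γ * (1 + r) ^ (-γ)) := by
          gcongr
          exacts [le_max_right _ _, rpow_neg_le_two_rpow_mul_one_add_rpow_neg hr₁ hγ]
      _ = _ := by ring

end Real

section

variable {E : Type*} [NormedAddCommGroup E]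

noncomputable def convMajorant (a b : ℝ) (ξ ζ : E) : ℝ≥0∞ :=
  (ball (0 : E) 1).indicator (fun z ↦ ENNReal.ofReal (‖z‖ ^ a)) ζ
    + ENNReal.ofReal ((1 + ‖ζ‖) ^ b) + ENNReal.ofReal ((1 + ‖ξ - ζ‖) ^ b)

lemma ofReal_rpow_norm_mul_one_add_norm_sub_rpow_neg_le {c γ : ℝ} (hc : c ≤ 0) (hγ : 0 ≤ γ)
    (ξ ζ : E) :
    ENNReal.ofReal (‖ζ‖ ^ c * (1 + ‖ξ - ζ‖) ^ (-γ))
      ≤ ENNReal.ofReal (2 ^ (-c)) * convMajorant c (c - γ) ξ ζ := by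
  classical
  have hind : (ball (0 : E) 1).indicator (fun z ↦ ENNReal.ofReal (‖z‖ ^ c)) ζ
      = ENNReal.ofReal (if ‖ζ‖ < 1 then ‖ζ‖ ^ c else 0) := by
    rw [indicator_apply, mem_ball_zero_iff, apply_ite ENNReal.ofReal, ENNReal.ofReal_zero]
  rw [convMajorant, hind, ← ENNReal.ofReal_add (by split_ifs <;> positivity) (by positivity),
    ← ENNReal.ofReal_add (by split_ifs <;> positivity) (by positivity),
    ← ENNReal.ofReal_mul (by positivity)]
  exact ENNReal.ofReal_le_ofReal
    (rpow_mul_one_add_rpow_neg_le (norm_nonneg _) (norm_nonneg _) hc hγ)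

lemma ofReal_rpow_norm_mul_sq_sin_sub_le_convMajorant {c k α η T t₁ t₂ : ℝ} (hc : c ≤ 0)
    (hα : 0 ≤ α) (hη₀ : 0 ≤ η) (hη₁ : η ≤ 1) (hαη : α ≤ k * η) (ht : t₁ ≤ t₂)
    (hT : t₂ - t₁ ≤ T) (ξ ζ : E) :
    ENNReal.ofReal (‖ζ‖ ^ c * (1 + ‖ξ - ζ‖ ^ 2) ^ α *
        (sin (t₂ * ‖ξ - ζ‖ ^ k) - sin (t₁ * ‖ξ - ζ‖ ^ k)) ^ 2 / ‖ξ - ζ‖ ^ (2 * k))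
      ≤ ENNReal.ofReal (2 ^ (α + 2 * (k * η - α)) * max (T ^ (2 * η)) 4
            * (t₂ - t₁) ^ (2 * (1 - η)))
        * (ENNReal.ofReal (2 ^ (-c)) * convMajorant c (c - 2 * (k * η - α)) ξ ζ) := by
  have hK : 0 ≤ 2 ^ (α + 2 * (k * η - α)) * max (T ^ (2 * η)) 4 * (t₂ - t₁) ^ (2 * (1 - η)) :=
    mul_nonneg (by positivity) (rpow_nonneg (sub_nonneg.2 ht) _)
  calc _ ≤ ENNReal.ofReal (‖ζ‖ ^ c * (2 ^ (α + 2 * (k * η - α)) * max (T ^ (2 * η)) 4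
          * (t₂ - t₁) ^ (2 * (1 - η)) * (1 + ‖ξ - ζ‖) ^ (-(2 * (k * η - α))))) := by
        rw [mul_assoc, mul_div_assoc]
        gcongr
        exact one_add_sq_rpow_mul_sq_sin_sub_div_le hα hη₀ hη₁ hαη ht hT (norm_nonneg _)
    _ = _ * ENNReal.ofReal (‖ζ‖ ^ c * (1 + ‖ξ - ζ‖) ^ (-(2 * (k * η - α)))) := by
        rw [← ENNReal.ofReal_mul hK]
        ring_nf
    _ ≤ _ := by
        gcongr
        exact ofReal_rpow_norm_mul_one_add_norm_sub_rpow_neg_le hc (by linarith) ξ ζ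

variable [NormedSpace ℝ E] [FiniteDimensional ℝ E] [MeasurableSpace E] [BorelSpace E]
  (μ : Measure E) [μ.IsAddHaarMeasure]

lemma lintegral_convMajorant (a b : ℝ) (ξ : E) :
    ∫⁻ ζ, convMajorant a b ξ ζ ∂μ
      = (∫⁻ z in ball 0 1, ENNReal.ofReal (‖z‖ ^ a) ∂μ)
        + 2 * ∫⁻ z, ENNReal.ofReal ((1 + ‖z‖) ^ b) ∂μ := by
  have hind : Measurable ((ball (0 : E) 1).indicator fun z ↦ ENNReal.ofReal (‖z‖ ^ a)) :=
    (by fun_prop : Measurable fun z : E ↦ ENNReal.ofReal (‖z‖ ^ a)).indicator measurableSet_ball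
  have hsum : Measurable fun ζ ↦ (ball (0 : E) 1).indicator (fun z ↦ ENNReal.ofReal (‖z‖ ^ a)) ζ
      + ENNReal.ofReal ((1 + ‖ζ‖) ^ b) := hind.add (by fun_prop)
  simp only [convMajorant]
  rw [lintegral_add_left hsum, lintegral_add_left hind,
    lintegral_indicator measurableSet_ball,
    lintegral_sub_left_eq_self (fun z ↦ ENNReal.ofReal ((1 + ‖z‖) ^ b)) ξ, add_assoc, two_mul]

lemma setLIntegral_ball_rpow_norm_lt_top (hd : 1 ≤ Module.finrank ℝ E) {a : ℝ}
    (ha : -(Module.finrank ℝ E : ℝ) < a) :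
    ∫⁻ z in ball 0 1, ENNReal.ofReal (‖z‖ ^ a) ∂μ < ⊤ := by
  refine IntegrableOn.setLIntegral_lt_top (integrableOn_ball_of_norm_le_rpow hd (C := 1)
    (α := -a) (by linarith) (ae_of_all _ fun z ↦ ?_)
    (measurable_norm.pow_const a).aestronglyMeasurable)
  rw [neg_neg, one_mul, norm_of_nonneg (by positivity)]

end

theorem stmt_8_general (d : ℕ) (hd : 1 ≤ d) (k α η T β : ℝ) (hk : 0 < k) (hα : 0 ≤ α)
    (hη₁ : α / k < η) (hη₂ : η < 1)
    (hβ0 : 0 < β) (hβd : β < d) (hβ : β < 2 * (k * η - α)) :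
    ∃ C : ℝ, ∀ t₁ t₂ : ℝ, 0 ≤ t₁ → t₁ ≤ t₂ → t₂ ≤ T →
      ∀ ξ : EuclideanSpace ℝ (Fin d),
        ∫⁻ ζ : EuclideanSpace ℝ (Fin d),
            ENNReal.ofReal (‖ζ‖ ^ (β - d) * (1 + ‖ξ - ζ‖ ^ 2) ^ α *
              (Real.sin (t₂ * ‖ξ - ζ‖ ^ k) - Real.sin (t₁ * ‖ξ - ζ‖ ^ k)) ^ 2 /
                ‖ξ - ζ‖ ^ (2 * k))
          ≤ ENNReal.ofReal (C * (t₂ - t₁) ^ (2 * (1 - η))) := by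
  have hαη : α ≤ k * η := by
    rw [div_lt_iff₀ hk] at hη₁
    linarith
  have hη₀ : 0 ≤ η := (div_nonneg hα hk.le).trans hη₁.le
  have hdim : Module.finrank ℝ (EuclideanSpace ℝ (Fin d)) = d := finrank_euclideanSpace_fin
  set K := 2 ^ (α + 2 * (k * η - α)) * max (T ^ (2 * η)) 4
  set M := ENNReal.ofReal (2 ^ (-(β - d))) *
    ((∫⁻ z in ball (0 : EuclideanSpace ℝ (Fin d)) 1, ENNReal.ofReal (‖z‖ ^ (β - d)))
      + 2 * ∫⁻ z : EuclideanSpace ℝ (Fin d),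
          ENNReal.ofReal ((1 + ‖z‖) ^ (β - d - 2 * (k * η - α))))
  have hM : M ≠ ⊤ := by
    refine ENNReal.mul_ne_top ENNReal.ofReal_ne_top (ENNReal.add_ne_top.2 ⟨?_, ?_⟩)
    · exact (setLIntegral_ball_rpow_norm_lt_top volume (by rwa [hdim])
        (by rw [hdim]; linarith)).ne
    · have hdecay := finite_integral_one_add_norm (μ := volume)
        (E := EuclideanSpace ℝ (Fin d)) (r := d + 2 * (k * η - α) - β) (by rw [hdim]; linarith)
      rw [show -(d + 2 * (k * η - α) - β) = β - d - 2 * (k * η - α) by ring] at hdecay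
      exact ENNReal.mul_ne_top (by simp) hdecay.ne
  refine ⟨K * M.toReal, fun t₁ t₂ ht₁ ht₁₂ ht₂ ξ ↦ ?_⟩
  have hKΔ : 0 ≤ K * (t₂ - t₁) ^ (2 * (1 - η)) :=
    mul_nonneg (by positivity) (rpow_nonneg (sub_nonneg.2 ht₁₂) _)
  calc _ ≤ ∫⁻ ζ, ENNReal.ofReal (K * (t₂ - t₁) ^ (2 * (1 - η)))
          * (ENNReal.ofReal (2 ^ (-(β - d)))
            * convMajorant (β - d) (β - d - 2 * (k * η - α)) ξ ζ) :=
        lintegral_mono fun ζ ↦ ofReal_rpow_norm_mul_sq_sin_sub_le_convMajorant (by linarith) hα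
          hη₀ hη₂.le hαη ht₁₂ (by linarith) ξ ζ
    _ = ENNReal.ofReal (K * (t₂ - t₁) ^ (2 * (1 - η))) * M := by
        rw [lintegral_const_mul' _ _ ENNReal.ofReal_ne_top,
          lintegral_const_mul' _ _ ENNReal.ofReal_ne_top, lintegral_convMajorant]
    _ = _ := by
        rw [mul_right_comm K, ENNReal.ofReal_mul hKΔ, ENNReal.ofReal_toReal hM]

theorem stmt_8 (d : ℕ) (hd : 1 ≤ d) (k α η T β : ℝ) (hk : 0 < k) (hα : 0 ≤ α)
    (hη₁ : α / k < η) (hη₂ : η < 1) (hT : 0 ≤ T)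
    (hβ0 : 0 < β) (hβd : β < d) (hβ : β < 2 * (k * η - α)) :
    ∃ C : ℝ, ∀ t₁ t₂ : ℝ, 0 ≤ t₁ → t₁ ≤ t₂ → t₂ ≤ T →
      ∀ ξ : EuclideanSpace ℝ (Fin d),
        ∫⁻ ζ : EuclideanSpace ℝ (Fin d),
            ENNReal.ofReal (‖ζ‖ ^ (β - d) * (1 + ‖ξ - ζ‖ ^ 2) ^ α *
              (Real.sin (t₂ * ‖ξ - ζ‖ ^ k) - Real.sin (t₁ * ‖ξ - ζ‖ ^ k)) ^ 2 /
                ‖ξ - ζ‖ ^ (2 * k))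
          ≤ ENNReal.ofReal (C * (t₂ - t₁) ^ (2 * (1 - η))) :=
  stmt_8_general d hd k α η T β hk hα hη₁ hη₂ hβ0 hβd hβ
end

section
/- Let k > 0, α ≥ 0, 0 < β < d with β < 2(k − α), and p ≥ 1. Then there is a finite constant C such that for every h ∈ [0,1], ∫_0^h ( sup_{ξ ∈ ℝ^d} ∫_{ℝ^d} ‖ζ‖^{β−d} (1 + ‖ξ − ζ‖²)^{α} (sin(s‖ξ − ζ‖^k))² / ‖ξ − ζ‖^{2k} dζ )^p ds ≤ C h^{p(2 − (β + 2α)/k) + 1}. -/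
open Real MeasureTheory Set
open scoped ENNReal

section Aux

variable {d : ℕ}

lemma lint_scale (g : EuclideanSpace ℝ (Fin d) → ℝ≥0∞) (hg : Measurable g)
    {R : ℝ} (hR : 0 < R) :
    ∫⁻ x, g x = ENNReal.ofReal (R ^ (d : ℝ)) * ∫⁻ x, g (R • x) := by
  have h1 : (∫⁻ x, g (R • x)) = ∫⁻ y, g y ∂(Measure.map (fun x => R • x) volume) :=
    (lintegral_map hg (measurable_const_smul R)).symm
  rw [h1, Measure.map_addHaar_smul volume (ne_of_gt hR), lintegral_smul_measure,
    finrank_euclideanSpace_fin]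
  rw [smul_eq_mul, ← mul_assoc, ← ENNReal.ofReal_mul (by positivity)]
  rw [abs_of_nonneg (by positivity), ← Real.rpow_natCast R d, ← Real.rpow_neg hR.le]
  rw [← Real.rpow_add hR, add_neg_cancel, Real.rpow_zero, ENNReal.ofReal_one, one_mul]

lemma meas_rpow_norm (e : ℝ) :
    Measurable fun x : EuclideanSpace ℝ (Fin d) => ENNReal.ofReal (‖x‖ ^ e) :=
  (measurable_norm.pow_const e).ennreal_ofReal

-- ball scaling: ∫_{‖ζ‖ ≤ R} ‖ζ‖^(e) = R^(e+d) * ∫_{‖ζ‖≤1}, for e arbitrary? need (R‖x‖)^e = R^e ‖x‖^e : ok both nonneg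
lemma ball_eval (e : ℝ) {R : ℝ} (hR : 0 < R) :
    ∫⁻ ζ : EuclideanSpace ℝ (Fin d) in {ζ | ‖ζ‖ ≤ R}, ENNReal.ofReal (‖ζ‖ ^ e)
      = ENNReal.ofReal (R ^ (e + d)) *
        ∫⁻ ζ : EuclideanSpace ℝ (Fin d) in {ζ | ‖ζ‖ ≤ 1}, ENNReal.ofReal (‖ζ‖ ^ e) := by
  have hms : MeasurableSet {ζ : EuclideanSpace ℝ (Fin d) | ‖ζ‖ ≤ R} :=
    measurableSet_le measurable_norm measurable_const
  have hms1 : MeasurableSet {ζ : EuclideanSpace ℝ (Fin d) | ‖ζ‖ ≤ 1} :=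
    measurableSet_le measurable_norm measurable_const
  rw [← lintegral_indicator hms, ← lintegral_indicator hms1]
  rw [lint_scale ({ζ : EuclideanSpace ℝ (Fin d) | ‖ζ‖ ≤ R}.indicator
      fun ζ => ENNReal.ofReal (‖ζ‖ ^ e)) ((meas_rpow_norm e).indicator hms) hR]
  have key : ∀ x : EuclideanSpace ℝ (Fin d),
      ({ζ : EuclideanSpace ℝ (Fin d) | ‖ζ‖ ≤ R}.indicator
        (fun ζ => ENNReal.ofReal (‖ζ‖ ^ e))) (R • x)
      = ENNReal.ofReal (R ^ e) *
        ({ζ : EuclideanSpace ℝ (Fin d) | ‖ζ‖ ≤ 1}.indicator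
          (fun ζ => ENNReal.ofReal (‖ζ‖ ^ e))) x := by
    intro x
    have hn : ‖R • x‖ = R * ‖x‖ := by
      rw [norm_smul, Real.norm_eq_abs, abs_of_nonneg hR.le]
    by_cases hx : ‖x‖ ≤ 1
    · have h1 : (R • x) ∈ {ζ : EuclideanSpace ℝ (Fin d) | ‖ζ‖ ≤ R} := by
        simp only [mem_setOf_eq, hn]; nlinarith [norm_nonneg x]
      have h2 : x ∈ {ζ : EuclideanSpace ℝ (Fin d) | ‖ζ‖ ≤ 1} := hx
      rw [indicator_of_mem h1, indicator_of_mem h2,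
        hn, Real.mul_rpow hR.le (norm_nonneg x), ENNReal.ofReal_mul (by positivity)]
    · have h1 : (R • x) ∉ {ζ : EuclideanSpace ℝ (Fin d) | ‖ζ‖ ≤ R} := by
        simp only [mem_setOf_eq, hn, not_le] at hx ⊢; nlinarith
      have h2 : x ∉ {ζ : EuclideanSpace ℝ (Fin d) | ‖ζ‖ ≤ 1} := hx
      rw [indicator_of_notMem h1, indicator_of_notMem h2, mul_zero]
  simp_rw [key]
  rw [lintegral_const_mul _ ((meas_rpow_norm e).indicator hms1), ← mul_assoc,
    ← ENNReal.ofReal_mul (by positivity), ← Real.rpow_add hR]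
  ring_nf

lemma tail_eval (e : ℝ) {R : ℝ} (hR : 0 < R) :
    ∫⁻ ζ : EuclideanSpace ℝ (Fin d) in {ζ | R < ‖ζ‖}, ENNReal.ofReal (‖ζ‖ ^ e)
      = ENNReal.ofReal (R ^ (e + d)) *
        ∫⁻ ζ : EuclideanSpace ℝ (Fin d) in {ζ | 1 < ‖ζ‖}, ENNReal.ofReal (‖ζ‖ ^ e) := by
  have hms : MeasurableSet {ζ : EuclideanSpace ℝ (Fin d) | R < ‖ζ‖} :=
    measurableSet_lt measurable_const measurable_norm
  have hms1 : MeasurableSet {ζ : EuclideanSpace ℝ (Fin d) | 1 < ‖ζ‖} :=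
    measurableSet_lt measurable_const measurable_norm
  rw [← lintegral_indicator hms, ← lintegral_indicator hms1]
  rw [lint_scale ({ζ : EuclideanSpace ℝ (Fin d) | R < ‖ζ‖}.indicator
      fun ζ => ENNReal.ofReal (‖ζ‖ ^ e)) ((meas_rpow_norm e).indicator hms) hR]
  have key : ∀ x : EuclideanSpace ℝ (Fin d),
      ({ζ : EuclideanSpace ℝ (Fin d) | R < ‖ζ‖}.indicator
        (fun ζ => ENNReal.ofReal (‖ζ‖ ^ e))) (R • x)
      = ENNReal.ofReal (R ^ e) *
        ({ζ : EuclideanSpace ℝ (Fin d) | 1 < ‖ζ‖}.indicator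
          (fun ζ => ENNReal.ofReal (‖ζ‖ ^ e))) x := by
    intro x
    have hn : ‖R • x‖ = R * ‖x‖ := by
      rw [norm_smul, Real.norm_eq_abs, abs_of_nonneg hR.le]
    by_cases hx : 1 < ‖x‖
    · have h1 : (R • x) ∈ {ζ : EuclideanSpace ℝ (Fin d) | R < ‖ζ‖} := by
        simp only [mem_setOf_eq, hn]; nlinarith
      have h2 : x ∈ {ζ : EuclideanSpace ℝ (Fin d) | 1 < ‖ζ‖} := hx
      rw [indicator_of_mem h1, indicator_of_mem h2,
        hn, Real.mul_rpow hR.le (norm_nonneg x), ENNReal.ofReal_mul (by positivity)]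
    · have h1 : (R • x) ∉ {ζ : EuclideanSpace ℝ (Fin d) | R < ‖ζ‖} := by
        simp only [mem_setOf_eq, hn, not_lt] at hx ⊢; nlinarith [norm_nonneg x]
      have h2 : x ∉ {ζ : EuclideanSpace ℝ (Fin d) | 1 < ‖ζ‖} := hx
      rw [indicator_of_notMem h1, indicator_of_notMem h2, mul_zero]
  simp_rw [key]
  rw [lintegral_const_mul _ ((meas_rpow_norm e).indicator hms1), ← mul_assoc,
    ← ENNReal.ofReal_mul (by positivity), ← Real.rpow_add hR]
  ring_nf

lemma tail_finite {δ : ℝ} (hδ : (d : ℝ) < δ) :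
    ∫⁻ ζ : EuclideanSpace ℝ (Fin d) in {ζ | 1 < ‖ζ‖}, ENNReal.ofReal (‖ζ‖ ^ (-δ)) < ⊤ := by
  have hδ0 : 0 ≤ δ := le_trans (Nat.cast_nonneg d) hδ.le
  have hbound : ∀ ζ : EuclideanSpace ℝ (Fin d), 1 < ‖ζ‖ →
      ‖ζ‖ ^ (-δ) ≤ 2 ^ δ * (1 + ‖ζ‖) ^ (-δ) := by
    intro ζ hζ
    have h0 : (0:ℝ) < ‖ζ‖ := lt_trans one_pos hζ
    have h2 : (1 + ‖ζ‖) ^ δ ≤ 2 ^ δ * ‖ζ‖ ^ δ := by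
      rw [← Real.mul_rpow (by norm_num) h0.le]
      apply Real.rpow_le_rpow (by positivity) (by linarith) hδ0
    have hp1 : (0:ℝ) < ‖ζ‖ ^ δ := Real.rpow_pos_of_pos h0 δ
    have hp2 : (0:ℝ) < (1 + ‖ζ‖) ^ δ := Real.rpow_pos_of_pos (by positivity) δ
    rw [Real.rpow_neg h0.le, Real.rpow_neg (by positivity)]
    rw [inv_le_iff_one_le_mul₀ hp1, mul_comm, ← mul_assoc]
    calc (1:ℝ) = (1 + ‖ζ‖)^δ * ((1 + ‖ζ‖)^δ)⁻¹ := (mul_inv_cancel₀ hp2.ne').symm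
    _ ≤ 2 ^ δ * ‖ζ‖ ^ δ * ((1+‖ζ‖)^δ)⁻¹ := mul_le_mul_of_nonneg_right h2 (by positivity)
    _ = ‖ζ‖ ^ δ * 2 ^ δ * ((1+‖ζ‖)^δ)⁻¹ := by ring
  calc ∫⁻ ζ : EuclideanSpace ℝ (Fin d) in {ζ | 1 < ‖ζ‖}, ENNReal.ofReal (‖ζ‖ ^ (-δ))
      ≤ ∫⁻ ζ : EuclideanSpace ℝ (Fin d) in {ζ | 1 < ‖ζ‖},
          ENNReal.ofReal (2 ^ δ * (1 + ‖ζ‖) ^ (-δ)) := by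
        apply setLIntegral_mono' (measurableSet_lt measurable_const measurable_norm)
        intro ζ hζ
        exact ENNReal.ofReal_le_ofReal (hbound ζ hζ)
    _ ≤ ∫⁻ ζ : EuclideanSpace ℝ (Fin d), ENNReal.ofReal (2 ^ δ * (1 + ‖ζ‖) ^ (-δ)) :=
        setLIntegral_le_lintegral _ _
    _ = ENNReal.ofReal (2 ^ δ) * ∫⁻ ζ : EuclideanSpace ℝ (Fin d),
          ENNReal.ofReal ((1 + ‖ζ‖) ^ (-δ)) := by
        simp_rw [ENNReal.ofReal_mul (by positivity : (0:ℝ) ≤ 2 ^ δ)]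
        exact lintegral_const_mul _ (((measurable_const.add measurable_norm).pow_const _).ennreal_ofReal)
    _ < ⊤ := by
        apply ENNReal.mul_lt_top ENNReal.ofReal_lt_top
        have := finite_integral_one_add_norm (E := EuclideanSpace ℝ (Fin d)) (μ := volume) (r := δ) ?_
        · exact this
        · rwa [finrank_euclideanSpace_fin]

lemma ball_finite {e : ℝ} (hed : -(d:ℝ) < e) (he : e < 0) :
    ∫⁻ ζ : EuclideanSpace ℝ (Fin d) in {ζ | ‖ζ‖ ≤ 1}, ENNReal.ofReal (‖ζ‖ ^ e) < ⊤ := by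
  set A : ℕ → Set (EuclideanSpace ℝ (Fin d)) :=
    fun n => {ζ | (2⁻¹:ℝ)^(n+1) < ‖ζ‖ ∧ ‖ζ‖ ≤ (2⁻¹:ℝ)^n} with hA
  have hAm : ∀ n, MeasurableSet (A n) := fun n =>
    (measurableSet_lt measurable_const measurable_norm).inter
      (measurableSet_le measurable_norm measurable_const)
  set c : ℕ → ℝ≥0∞ := fun n => ENNReal.ofReal (((2⁻¹:ℝ)^(n+1)) ^ e) with hc
  have hms1 : MeasurableSet {ζ : EuclideanSpace ℝ (Fin d) | ‖ζ‖ ≤ 1} :=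
    measurableSet_le measurable_norm measurable_const
  rw [← lintegral_indicator hms1]
  have hpt : ∀ ζ : EuclideanSpace ℝ (Fin d),
      ({ζ : EuclideanSpace ℝ (Fin d) | ‖ζ‖ ≤ 1}.indicator
        (fun ζ => ENNReal.ofReal (‖ζ‖ ^ e))) ζ
      ≤ ∑' n, (A n).indicator (fun _ => c n) ζ := by
    intro ζ
    by_cases hζ : ‖ζ‖ ≤ 1
    · rw [indicator_of_mem (hζ : ζ ∈ _)]
      by_cases h0 : ‖ζ‖ = 0
      · rw [h0, Real.zero_rpow (ne_of_lt he)]; simp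
      · have h0' : 0 < ‖ζ‖ := lt_of_le_of_ne (norm_nonneg _) (Ne.symm h0)
        have hex : ∃ n, (2⁻¹:ℝ)^(n+1) < ‖ζ‖ := by
          obtain ⟨m, hm⟩ := exists_pow_lt_of_lt_one h0' (by norm_num : (2⁻¹:ℝ) < 1)
          exact ⟨m, lt_of_le_of_lt (by
            apply pow_le_pow_of_le_one (by norm_num) (by norm_num) (Nat.le_succ m)) hm⟩
        set n := Nat.find hex with hn
        have h1 : (2⁻¹:ℝ)^(n+1) < ‖ζ‖ := Nat.find_spec hex
        have h2 : ‖ζ‖ ≤ (2⁻¹:ℝ)^n := by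
          rcases Nat.eq_zero_or_pos n with h | h
          · rw [h]; simpa using hζ
          · have := Nat.find_min hex (m := n - 1) (by omega)
            push_neg at this
            rwa [Nat.sub_add_cancel h] at this
        have hmem : ζ ∈ A n := ⟨h1, h2⟩
        refine le_trans ?_ (ENNReal.le_tsum n)
        rw [indicator_of_mem hmem]
        exact ENNReal.ofReal_le_ofReal
          (Real.rpow_le_rpow_of_nonpos (by positivity) h1.le he.le)
    · rw [indicator_of_notMem (hζ : ζ ∉ _)]; exact zero_le
  calc ∫⁻ ζ, ({ζ : EuclideanSpace ℝ (Fin d) | ‖ζ‖ ≤ 1}.indicator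
        (fun ζ => ENNReal.ofReal (‖ζ‖ ^ e))) ζ
      ≤ ∫⁻ ζ, ∑' n, (A n).indicator (fun _ => c n) ζ := lintegral_mono hpt
    _ = ∑' n, ∫⁻ ζ, (A n).indicator (fun _ => c n) ζ :=
        lintegral_tsum (fun n => ((measurable_const).indicator (hAm n)).aemeasurable)
    _ = ∑' n, c n * volume (A n) :=
        tsum_congr fun n => lintegral_indicator_const (hAm n) (c n)
    _ ≤ ∑' n, (ENNReal.ofReal ((2⁻¹:ℝ) ^ e) * ENNReal.ofReal (((2⁻¹:ℝ)^(e + d))) ^ n)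
          * volume (Metric.ball (0 : EuclideanSpace ℝ (Fin d)) 1) := by
        apply ENNReal.tsum_le_tsum
        intro n
        have hsub : A n ⊆ Metric.closedBall 0 ((2⁻¹:ℝ)^n) := by
          intro ζ hζ; simpa [Metric.mem_closedBall, dist_zero_right] using hζ.2
        have hvol : volume (A n) ≤ ENNReal.ofReal (((2⁻¹:ℝ)^n) ^ d)
            * volume (Metric.ball (0 : EuclideanSpace ℝ (Fin d)) 1) := by
          refine le_trans (measure_mono hsub) ?_
          rw [Measure.addHaar_closedBall volume 0 (by positivity), finrank_euclideanSpace_fin]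
        refine le_trans (mul_le_mul_right hvol _) ?_
        rw [← mul_assoc]
        apply mul_le_mul_left
        -- c n * ofReal((2⁻¹^n)^d) ≤ ofReal(2⁻¹^e) * ofReal(2⁻¹^(e+d))^n
        rw [hc]
        rw [← ENNReal.ofReal_mul (by positivity), ← ENNReal.ofReal_pow (by positivity),
          ← ENNReal.ofReal_mul (by positivity)]
        apply ENNReal.ofReal_le_ofReal
        apply le_of_eq
        have h2 : (0:ℝ) < 2⁻¹ := by norm_num
        rw [← Real.rpow_natCast (2⁻¹:ℝ) (n+1), ← Real.rpow_natCast (2⁻¹:ℝ) n,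
          ← Real.rpow_mul h2.le]
        have k1 : ((2⁻¹:ℝ) ^ ((n:ℝ))) ^ d = (2⁻¹:ℝ) ^ ((n:ℝ) * d) := by
          rw [← Real.rpow_natCast ((2⁻¹:ℝ) ^ ((n:ℝ))) d, ← Real.rpow_mul h2.le]
        have k2 : ((2⁻¹:ℝ) ^ (e + (d:ℝ))) ^ n = (2⁻¹:ℝ) ^ ((e + (d:ℝ)) * n) := by
          rw [← Real.rpow_natCast ((2⁻¹:ℝ) ^ (e + (d:ℝ))) n, ← Real.rpow_mul h2.le]
        rw [k1, k2, ← Real.rpow_add h2, ← Real.rpow_add h2]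
        congr 1
        push_cast
        ring
    _ < ⊤ := by
        rw [ENNReal.tsum_mul_right, ENNReal.tsum_mul_left, ENNReal.tsum_geometric]
        refine ENNReal.mul_lt_top (ENNReal.mul_lt_top ENNReal.ofReal_lt_top ?_) measure_ball_lt_top
        rw [ENNReal.inv_lt_top]
        apply tsub_pos_of_lt
        rw [← ENNReal.ofReal_one]
        apply ENNReal.ofReal_lt_ofReal_iff_of_nonneg (by positivity) |>.mpr
        apply Real.rpow_lt_one (by norm_num) (by norm_num)
        linarith

lemma pointwise_bound {d : ℕ} {k α β γ : ℝ} (hk : 0 < k) (hα : 0 ≤ α) (hβ0 : 0 < β)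
    (hβd : β < d) (hγ : γ = 2*k - 2*α - β) (hγβ : 0 < γ + β) {s R : ℝ} (hs : 0 < s)
    (hR1 : 1 ≤ R) (ξ ζ : EuclideanSpace ℝ (Fin d)) :
    ENNReal.ofReal (‖ζ‖ ^ (β - d) * (1 + ‖ξ - ζ‖ ^ 2) ^ α *
        Real.sin (s * ‖ξ - ζ‖ ^ k) ^ 2 / ‖ξ - ζ‖ ^ (2 * k))
    ≤ {ζ' : EuclideanSpace ℝ (Fin d) | ‖ξ - ζ'‖ ≤ R ∧ ‖ζ'‖ ≤ R}.indicator
        (fun ζ' => ENNReal.ofReal (2^α * R^(2*α) * s^(2:ℝ)) * ENNReal.ofReal (‖ζ'‖^(β-d))) ζ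
      + {ζ' : EuclideanSpace ℝ (Fin d) | ‖ξ - ζ'‖ ≤ R ∧ R < ‖ζ'‖}.indicator
        (fun _ => ENNReal.ofReal (2^α * R^(2*α) * s^(2:ℝ)) * ENNReal.ofReal (R^(β-d))) ζ
      + {ζ' : EuclideanSpace ℝ (Fin d) | R < ‖ξ - ζ'‖ ∧ ‖ζ'‖ ≤ R}.indicator
        (fun ζ' => ENNReal.ofReal (2^α * R^(-(γ+β))) * ENNReal.ofReal (‖ζ'‖^(β-d))) ζ
      + {ζ' : EuclideanSpace ℝ (Fin d) | R < ‖ξ - ζ'‖ ∧ R < ‖ζ'‖}.indicator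
        (fun ζ' => ENNReal.ofReal (2^α) *
          (ENNReal.ofReal (‖ζ'‖^(-((d:ℝ)+γ))) + ENNReal.ofReal (‖ξ - ζ'‖^(-((d:ℝ)+γ))))) ζ := by
  set r := ‖ξ - ζ‖ with hrdef
  set n := ‖ζ‖ with hndef
  have hR0 : (0:ℝ) < R := lt_of_lt_of_le one_pos hR1
  by_cases hr0 : r = 0
  · have h1 : Real.sin (s * r ^ k) = 0 := by
      rw [hr0, Real.zero_rpow (ne_of_gt hk), mul_zero, Real.sin_zero]
    rw [h1]
    simpa using zero_le _
  by_cases hn0 : n = 0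
  · have h1 : n ^ (β - (d:ℝ)) = 0 := by
      rw [hn0]; exact Real.zero_rpow (sub_ne_zero.mpr (ne_of_lt hβd))
    rw [h1]
    simpa using zero_le _
  have hr : 0 < r := lt_of_le_of_ne (norm_nonneg _) (Ne.symm hr0)
  have hn : 0 < n := lt_of_le_of_ne (norm_nonneg _) (Ne.symm hn0)
  have hr2k : (0:ℝ) < r ^ (2*k) := Real.rpow_pos_of_pos hr _
  by_cases hcase : r ≤ R
  · -- near region: sin² ≤ (s r^k)²
    have hsin : Real.sin (s * r ^ k) ^ 2 ≤ s^(2:ℝ) * r^(2*k) := by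
      refine le_trans Real.sin_sq_le_sq (le_of_eq ?_)
      rw [mul_pow, ← Real.rpow_natCast s 2, ← Real.rpow_natCast (r^k) 2,
        ← Real.rpow_mul hr.le]
      push_cast
      rw [mul_comm k 2]
    have hone : (1 + r^2)^α ≤ 2^α * R^(2*α) := by
      have h1 : (1:ℝ) + r^2 ≤ 2 * R^(2:ℝ) := by
        have : r^2 ≤ R^(2:ℝ) := by
          rw [Real.rpow_two]; nlinarith [hr.le]
        nlinarith [Real.rpow_le_rpow (by norm_num : (0:ℝ) ≤ 1) hR1 (by norm_num : (0:ℝ) ≤ (2:ℝ)),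
          Real.one_rpow (2:ℝ)]
      calc (1 + r^2)^α ≤ (2 * R^(2:ℝ))^α :=
            Real.rpow_le_rpow (by positivity) h1 hα
        _ = 2^α * R^(2*α) := by
            rw [Real.mul_rpow (by norm_num) (by positivity), ← Real.rpow_mul hR0.le]
    have hfle : n ^ (β - (d:ℝ)) * (1 + r ^ 2) ^ α * Real.sin (s * r ^ k) ^ 2 / r ^ (2*k)
        ≤ 2^α * R^(2*α) * s^(2:ℝ) * n^(β-d) := by
      rw [div_le_iff₀ hr2k]
      calc n ^ (β - (d:ℝ)) * (1 + r ^ 2) ^ α * Real.sin (s * r ^ k) ^ 2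
          ≤ n ^ (β - (d:ℝ)) * (2^α * R^(2*α)) * (s^(2:ℝ) * r^(2*k)) := by
            gcongr
        _ = 2^α * R^(2*α) * s^(2:ℝ) * n^(β-d) * r ^ (2*k) := by ring
    by_cases hns : n ≤ R
    · have hmem : ζ ∈ {ζ' : EuclideanSpace ℝ (Fin d) | ‖ξ - ζ'‖ ≤ R ∧ ‖ζ'‖ ≤ R} := ⟨hcase, hns⟩
      refine le_trans ?_ (le_add_right (le_add_right (self_le_add_right _ _)))
      rw [indicator_of_mem hmem, ← ENNReal.ofReal_mul (by positivity)]
      exact ENNReal.ofReal_le_ofReal hfle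
    · have hmem : ζ ∈ {ζ' : EuclideanSpace ℝ (Fin d) | ‖ξ - ζ'‖ ≤ R ∧ R < ‖ζ'‖} :=
        ⟨hcase, not_le.mp hns⟩
      refine le_trans ?_ (le_add_right (le_add_right (self_le_add_left _ _)))
      rw [indicator_of_mem hmem, ← ENNReal.ofReal_mul (by positivity)]
      refine ENNReal.ofReal_le_ofReal (le_trans hfle ?_)
      have : n ^ (β - (d:ℝ)) ≤ R ^ (β - (d:ℝ)) :=
        Real.rpow_le_rpow_of_nonpos hR0 (not_le.mp hns).le (by linarith)
      gcongr
  · -- far region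
    push_neg at hcase
    have h1r : 1 < r := lt_of_le_of_lt hR1 hcase
    have hsin : Real.sin (s * r ^ k) ^ 2 ≤ 1 := Real.sin_sq_le_one _
    have hone : (1 + r^2)^α ≤ 2^α * r^(2*α) := by
      have h1 : (1:ℝ) + r^2 ≤ 2 * r^(2:ℝ) := by
        rw [Real.rpow_two]; nlinarith
      calc (1 + r^2)^α ≤ (2 * r^(2:ℝ))^α := Real.rpow_le_rpow (by positivity) h1 hα
        _ = 2^α * r^(2*α) := by
            rw [Real.mul_rpow (by norm_num) (by positivity), ← Real.rpow_mul hr.le]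
    have hfle : n ^ (β - (d:ℝ)) * (1 + r ^ 2) ^ α * Real.sin (s * r ^ k) ^ 2 / r ^ (2*k)
        ≤ 2^α * n^(β-(d:ℝ)) * r^(-(γ+β)) := by
      rw [div_le_iff₀ hr2k]
      calc n ^ (β - (d:ℝ)) * (1 + r ^ 2) ^ α * Real.sin (s * r ^ k) ^ 2
          ≤ n ^ (β - (d:ℝ)) * (2^α * r^(2*α)) * 1 := by gcongr
        _ = 2^α * n^(β-(d:ℝ)) * (r^(2*α) / r^(2*k) * r^(2*k)) := by
            field_simp
        _ = 2^α * n^(β-(d:ℝ)) * r^(-(γ+β)) * r ^ (2*k) := by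
            rw [← Real.rpow_sub hr]
            have : 2*α - 2*k = -(γ+β) := by rw [hγ]; ring
            rw [this]; ring
    by_cases hns : n ≤ R
    · have hmem : ζ ∈ {ζ' : EuclideanSpace ℝ (Fin d) | R < ‖ξ - ζ'‖ ∧ ‖ζ'‖ ≤ R} := ⟨hcase, hns⟩
      refine le_trans ?_ (le_add_right (self_le_add_left _ _))
      rw [indicator_of_mem hmem, ← ENNReal.ofReal_mul (by positivity)]
      refine ENNReal.ofReal_le_ofReal (le_trans hfle ?_)
      have : r ^ (-(γ+β)) ≤ R ^ (-(γ+β)) :=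
        Real.rpow_le_rpow_of_nonpos hR0 hcase.le (by linarith)
      calc 2^α * n^(β-(d:ℝ)) * r^(-(γ+β)) ≤ 2^α * n^(β-(d:ℝ)) * R^(-(γ+β)) := by
            gcongr
        _ = 2 ^ α * R ^ (-(γ + β)) * n ^ (β - (d:ℝ)) := by ring
    · have hmem : ζ ∈ {ζ' : EuclideanSpace ℝ (Fin d) | R < ‖ξ - ζ'‖ ∧ R < ‖ζ'‖} :=
        ⟨hcase, not_le.mp hns⟩
      refine le_trans ?_ (self_le_add_left _ _)
      rw [indicator_of_mem hmem]
      by_cases hnr : n ≤ r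
      · refine le_trans ?_ (mul_le_mul_right (self_le_add_right _ _) _)
        rw [← ENNReal.ofReal_mul (by positivity)]
        refine ENNReal.ofReal_le_ofReal (le_trans hfle ?_)
        have h1 : r ^ (-(γ+β)) ≤ n ^ (-(γ+β)) :=
          Real.rpow_le_rpow_of_nonpos hn hnr (by linarith)
        calc 2^α * n^(β-(d:ℝ)) * r^(-(γ+β)) ≤ 2^α * n^(β-(d:ℝ)) * n^(-(γ+β)) := by
              gcongr
          _ = 2^α * n^(-((d:ℝ)+γ)) := by
              rw [mul_assoc, ← Real.rpow_add hn]
              congr 2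
              ring
      · push_neg at hnr
        refine le_trans ?_ (mul_le_mul_right (self_le_add_left _ _) _)
        rw [← ENNReal.ofReal_mul (by positivity)]
        refine ENNReal.ofReal_le_ofReal (le_trans hfle ?_)
        have h1 : n ^ (β-(d:ℝ)) ≤ r ^ (β-(d:ℝ)) :=
          Real.rpow_le_rpow_of_nonpos hr hnr.le (by linarith)
        calc 2^α * n^(β-(d:ℝ)) * r^(-(γ+β)) ≤ 2^α * r^(β-(d:ℝ)) * r^(-(γ+β)) := by
              gcongr
          _ = 2^α * r^(-((d:ℝ)+γ)) := by
              rw [mul_assoc, ← Real.rpow_add hr]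
              congr 2
              ring

lemma main_bound (d : ℕ) {k α β : ℝ} (hk : 0 < k) (hα : 0 ≤ α) (hβ0 : 0 < β)
    (hβd : β < d) (hβ2 : β < 2*(k-α)) :
    ∃ M : ℝ≥0∞, M ≠ ⊤ ∧ ∀ s : ℝ, 0 < s → s ≤ 1 → ∀ ξ : EuclideanSpace ℝ (Fin d),
      (∫⁻ ζ : EuclideanSpace ℝ (Fin d), ENNReal.ofReal (‖ζ‖ ^ (β - d) * (1 + ‖ξ - ζ‖ ^ 2) ^ α *
          Real.sin (s * ‖ξ - ζ‖ ^ k) ^ 2 / ‖ξ - ζ‖ ^ (2 * k)))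
        ≤ ENNReal.ofReal (s ^ ((2*k - 2*α - β)/k)) * M := by
  set γ : ℝ := 2*k - 2*α - β with hγ
  have hγ0 : 0 < γ := by rw [hγ]; linarith
  have hγβ : 0 < γ + β := by linarith
  set J : ℝ≥0∞ := ∫⁻ ζ : EuclideanSpace ℝ (Fin d) in {ζ | ‖ζ‖ ≤ 1},
    ENNReal.ofReal (‖ζ‖ ^ (β - (d:ℝ))) with hJdef
  have hdpos : (0:ℝ) < d := lt_trans hβ0 hβd
  have hJ : J < ⊤ := ball_finite (by linarith) (by linarith)
  set T : ℝ≥0∞ := ∫⁻ ζ : EuclideanSpace ℝ (Fin d) in {ζ | 1 < ‖ζ‖},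
    ENNReal.ofReal (‖ζ‖ ^ (-((d:ℝ) + γ))) with hTdef
  have hT : T < ⊤ := tail_finite (by linarith)
  set V : ℝ≥0∞ := volume (Metric.ball (0 : EuclideanSpace ℝ (Fin d)) 1) with hVdef
  have hV : V < ⊤ := measure_ball_lt_top
  refine ⟨ENNReal.ofReal (2^α) * (J + V + J + (T + T)), ?_, ?_⟩
  · exact ENNReal.mul_ne_top ENNReal.ofReal_ne_top
      (by simp [ENNReal.add_ne_top, hJ.ne, hV.ne, hT.ne])
  intro s hs hs1 ξ
  set R : ℝ := s ^ (-(1/k)) with hRdef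
  have hR0 : 0 < R := Real.rpow_pos_of_pos hs _
  have hR1 : 1 ≤ R := Real.one_le_rpow_of_pos_of_le_one_of_nonpos hs hs1
    (by rw [neg_nonpos]; positivity)
  have hRt : ∀ t : ℝ, R ^ t = s ^ (-(t/k)) := by
    intro t
    rw [hRdef, ← Real.rpow_mul hs.le]
    congr 1
    field_simp
  -- measurability of sets
  have hmr : Measurable fun ζ : EuclideanSpace ℝ (Fin d) => ‖ξ - ζ‖ :=
    (measurable_const.sub measurable_id).norm
  have hS1 : MeasurableSet {ζ' : EuclideanSpace ℝ (Fin d) | ‖ξ - ζ'‖ ≤ R ∧ ‖ζ'‖ ≤ R} :=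
    (measurableSet_le hmr measurable_const).inter (measurableSet_le measurable_norm measurable_const)
  have hS2 : MeasurableSet {ζ' : EuclideanSpace ℝ (Fin d) | ‖ξ - ζ'‖ ≤ R ∧ R < ‖ζ'‖} :=
    (measurableSet_le hmr measurable_const).inter (measurableSet_lt measurable_const measurable_norm)
  have hS3 : MeasurableSet {ζ' : EuclideanSpace ℝ (Fin d) | R < ‖ξ - ζ'‖ ∧ ‖ζ'‖ ≤ R} :=
    (measurableSet_lt measurable_const hmr).inter (measurableSet_le measurable_norm measurable_const)
  have hS4 : MeasurableSet {ζ' : EuclideanSpace ℝ (Fin d) | R < ‖ξ - ζ'‖ ∧ R < ‖ζ'‖} :=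
    (measurableSet_lt measurable_const hmr).inter (measurableSet_lt measurable_const measurable_norm)
  -- the four integral bounds
  have hβd' : β - (d:ℝ) + d = β := by ring
  have hF1 : (2:ℝ)^α * R^(2*α) * s^(2:ℝ) * R^β = 2^α * s^(γ/k) := by
    rw [hRt (2*α), hRt β]
    have h2 : s ^ (-(2*α/k)) * s^(2:ℝ) * s^(-(β/k)) = s ^ (γ/k) := by
      rw [← Real.rpow_add hs, ← Real.rpow_add hs]
      congr 1
      field_simp
      ring
    calc (2:ℝ)^α * s^(-(2*α/k)) * s^(2:ℝ) * s^(-(β/k))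
        = 2^α * (s ^ (-(2*α/k)) * s^(2:ℝ) * s^(-(β/k))) := by ring
      _ = 2^α * s^(γ/k) := by rw [h2]
  have hI1 : (∫⁻ ζ, {ζ' : EuclideanSpace ℝ (Fin d) | ‖ξ - ζ'‖ ≤ R ∧ ‖ζ'‖ ≤ R}.indicator
        (fun ζ' => ENNReal.ofReal (2^α * R^(2*α) * s^(2:ℝ)) * ENNReal.ofReal (‖ζ'‖^(β-d))) ζ)
      ≤ ENNReal.ofReal (s ^ (γ/k)) * (ENNReal.ofReal (2^α) * J) := by
    rw [lintegral_indicator hS1]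
    calc ∫⁻ ζ in {ζ' : EuclideanSpace ℝ (Fin d) | ‖ξ - ζ'‖ ≤ R ∧ ‖ζ'‖ ≤ R},
          ENNReal.ofReal (2^α * R^(2*α) * s^(2:ℝ)) * ENNReal.ofReal (‖ζ‖^(β-d))
        ≤ ∫⁻ ζ in {ζ' : EuclideanSpace ℝ (Fin d) | ‖ζ'‖ ≤ R},
          ENNReal.ofReal (2^α * R^(2*α) * s^(2:ℝ)) * ENNReal.ofReal (‖ζ‖^(β-d)) :=
          lintegral_mono_set (fun ζ hζ => hζ.2)
      _ = ENNReal.ofReal (2^α * R^(2*α) * s^(2:ℝ)) *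
            ∫⁻ ζ in {ζ' : EuclideanSpace ℝ (Fin d) | ‖ζ'‖ ≤ R}, ENNReal.ofReal (‖ζ‖^(β-d)) :=
          lintegral_const_mul _ (meas_rpow_norm _)
      _ = ENNReal.ofReal (2^α * R^(2*α) * s^(2:ℝ)) * (ENNReal.ofReal (R ^ (β - (d:ℝ) + d)) * J) := by
          rw [ball_eval (β - (d:ℝ)) hR0]
      _ = ENNReal.ofReal (s ^ (γ/k)) * (ENNReal.ofReal (2^α) * J) := by
          rw [hβd', ← mul_assoc, ← ENNReal.ofReal_mul (by positivity), hF1,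
            ENNReal.ofReal_mul (by positivity)]
          ring
  have hI2 : (∫⁻ ζ, {ζ' : EuclideanSpace ℝ (Fin d) | ‖ξ - ζ'‖ ≤ R ∧ R < ‖ζ'‖}.indicator
        (fun _ => ENNReal.ofReal (2^α * R^(2*α) * s^(2:ℝ)) * ENNReal.ofReal (R^(β-d))) ζ)
      ≤ ENNReal.ofReal (s ^ (γ/k)) * (ENNReal.ofReal (2^α) * V) := by
    rw [lintegral_indicator_const hS2]
    have hsub : {ζ' : EuclideanSpace ℝ (Fin d) | ‖ξ - ζ'‖ ≤ R ∧ R < ‖ζ'‖}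
        ⊆ Metric.closedBall ξ R := by
      intro ζ hζ
      rw [Metric.mem_closedBall, dist_comm, dist_eq_norm]
      exact hζ.1
    calc ENNReal.ofReal (2^α * R^(2*α) * s^(2:ℝ)) * ENNReal.ofReal (R^(β-(d:ℝ))) *
          volume {ζ' : EuclideanSpace ℝ (Fin d) | ‖ξ - ζ'‖ ≤ R ∧ R < ‖ζ'‖}
        ≤ ENNReal.ofReal (2^α * R^(2*α) * s^(2:ℝ)) * ENNReal.ofReal (R^(β-(d:ℝ))) *
          volume (Metric.closedBall ξ R) := mul_le_mul_right (measure_mono hsub) _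
      _ = ENNReal.ofReal (2^α * R^(2*α) * s^(2:ℝ)) * ENNReal.ofReal (R^(β-(d:ℝ))) *
          (ENNReal.ofReal (R ^ (d:ℕ)) * V) := by
          rw [Measure.addHaar_closedBall volume ξ hR0.le, finrank_euclideanSpace_fin]
      _ = ENNReal.ofReal (s ^ (γ/k)) * (ENNReal.ofReal (2^α) * V) := by
          rw [← mul_assoc, ← ENNReal.ofReal_mul (by positivity),
            ← ENNReal.ofReal_mul (by positivity)]
          have he : (2:ℝ)^α * R^(2*α) * s^(2:ℝ) * R^(β-(d:ℝ)) * R^(d:ℕ) = 2^α * s^(γ/k) := by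
            rw [← Real.rpow_natCast R d, mul_assoc _ (R^(β-(d:ℝ))), ← Real.rpow_add hR0, hβd']
            exact hF1
          rw [he, ENNReal.ofReal_mul (by positivity)]
          ring
  have hI3 : (∫⁻ ζ, {ζ' : EuclideanSpace ℝ (Fin d) | R < ‖ξ - ζ'‖ ∧ ‖ζ'‖ ≤ R}.indicator
        (fun ζ' => ENNReal.ofReal (2^α * R^(-(γ+β))) * ENNReal.ofReal (‖ζ'‖^(β-d))) ζ)
      ≤ ENNReal.ofReal (s ^ (γ/k)) * (ENNReal.ofReal (2^α) * J) := by
    rw [lintegral_indicator hS3]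
    calc ∫⁻ ζ in {ζ' : EuclideanSpace ℝ (Fin d) | R < ‖ξ - ζ'‖ ∧ ‖ζ'‖ ≤ R},
          ENNReal.ofReal (2^α * R^(-(γ+β))) * ENNReal.ofReal (‖ζ‖^(β-d))
        ≤ ∫⁻ ζ in {ζ' : EuclideanSpace ℝ (Fin d) | ‖ζ'‖ ≤ R},
          ENNReal.ofReal (2^α * R^(-(γ+β))) * ENNReal.ofReal (‖ζ‖^(β-d)) :=
          lintegral_mono_set (fun ζ hζ => hζ.2)
      _ = ENNReal.ofReal (2^α * R^(-(γ+β))) *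
            ∫⁻ ζ in {ζ' : EuclideanSpace ℝ (Fin d) | ‖ζ'‖ ≤ R}, ENNReal.ofReal (‖ζ‖^(β-d)) :=
          lintegral_const_mul _ (meas_rpow_norm _)
      _ = ENNReal.ofReal (2^α * R^(-(γ+β))) * (ENNReal.ofReal (R ^ (β - (d:ℝ) + d)) * J) := by
          rw [ball_eval (β - (d:ℝ)) hR0]
      _ = ENNReal.ofReal (s ^ (γ/k)) * (ENNReal.ofReal (2^α) * J) := by
          rw [hβd', ← mul_assoc, ← ENNReal.ofReal_mul (by positivity)]
          have he : (2:ℝ)^α * R^(-(γ+β)) * R^β = 2^α * s^(γ/k) := by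
            rw [mul_assoc, ← Real.rpow_add hR0]
            have h1 : -(γ+β)+β = -γ := by ring
            have h2 : R ^ (-γ) = s ^ (γ/k) := by
              rw [hRt (-γ)]
              congr 1
              ring
            rw [h1, h2]
          rw [he, ENNReal.ofReal_mul (by positivity)]
          ring
  have hRγ : R ^ (-γ) = s ^ (γ/k) := by
    rw [hRt (-γ)]
    congr 1
    ring
  have hγd : -((d:ℝ)+γ) + d = -γ := by ring
  have hI4 : (∫⁻ ζ, {ζ' : EuclideanSpace ℝ (Fin d) | R < ‖ξ - ζ'‖ ∧ R < ‖ζ'‖}.indicator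
        (fun ζ' => ENNReal.ofReal (2^α) *
          (ENNReal.ofReal (‖ζ'‖^(-((d:ℝ)+γ))) + ENNReal.ofReal (‖ξ - ζ'‖^(-((d:ℝ)+γ))))) ζ)
      ≤ ENNReal.ofReal (s ^ (γ/k)) * (ENNReal.ofReal (2^α) * (T + T)) := by
    have hmsn : MeasurableSet {ζ' : EuclideanSpace ℝ (Fin d) | R < ‖ζ'‖} :=
      measurableSet_lt measurable_const measurable_norm
    have hmsr : MeasurableSet {ζ' : EuclideanSpace ℝ (Fin d) | R < ‖ξ - ζ'‖} :=
      measurableSet_lt measurable_const hmr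
    have hsplit : ∀ ζ : EuclideanSpace ℝ (Fin d),
        {ζ' : EuclideanSpace ℝ (Fin d) | R < ‖ξ - ζ'‖ ∧ R < ‖ζ'‖}.indicator
          (fun ζ' => ENNReal.ofReal (2^α) *
            (ENNReal.ofReal (‖ζ'‖^(-((d:ℝ)+γ))) + ENNReal.ofReal (‖ξ - ζ'‖^(-((d:ℝ)+γ))))) ζ
        ≤ {ζ' : EuclideanSpace ℝ (Fin d) | R < ‖ζ'‖}.indicator
            (fun ζ' => ENNReal.ofReal (2^α) * ENNReal.ofReal (‖ζ'‖^(-((d:ℝ)+γ)))) ζ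
          + {ζ' : EuclideanSpace ℝ (Fin d) | R < ‖ξ - ζ'‖}.indicator
            (fun ζ' => ENNReal.ofReal (2^α) * ENNReal.ofReal (‖ξ - ζ'‖^(-((d:ℝ)+γ)))) ζ := by
      intro ζ
      by_cases h : ζ ∈ {ζ' : EuclideanSpace ℝ (Fin d) | R < ‖ξ - ζ'‖ ∧ R < ‖ζ'‖}
      · have hmA : ζ ∈ {ζ' : EuclideanSpace ℝ (Fin d) | R < ‖ζ'‖} := h.2
        have hmB : ζ ∈ {ζ' : EuclideanSpace ℝ (Fin d) | R < ‖ξ - ζ'‖} := h.1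
        rw [indicator_of_mem h, indicator_of_mem hmA, indicator_of_mem hmB, mul_add]
      · rw [indicator_of_notMem h]
        exact zero_le
    have hA : (∫⁻ ζ, {ζ' : EuclideanSpace ℝ (Fin d) | R < ‖ζ'‖}.indicator
          (fun ζ' => ENNReal.ofReal (2^α) * ENNReal.ofReal (‖ζ'‖^(-((d:ℝ)+γ)))) ζ)
        = ENNReal.ofReal (s ^ (γ/k)) * (ENNReal.ofReal (2^α) * T) := by
      rw [lintegral_indicator hmsn, lintegral_const_mul _ (meas_rpow_norm _),
        tail_eval (-((d:ℝ)+γ)) hR0, hγd, hRγ]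
      ring
    have hB : (∫⁻ ζ, {ζ' : EuclideanSpace ℝ (Fin d) | R < ‖ξ - ζ'‖}.indicator
          (fun ζ' => ENNReal.ofReal (2^α) * ENNReal.ofReal (‖ξ - ζ'‖^(-((d:ℝ)+γ)))) ζ)
        = ENNReal.ofReal (s ^ (γ/k)) * (ENNReal.ofReal (2^α) * T) := by
      have hcomp : ∀ ζ : EuclideanSpace ℝ (Fin d),
          {ζ' : EuclideanSpace ℝ (Fin d) | R < ‖ξ - ζ'‖}.indicator
            (fun ζ' => ENNReal.ofReal (2^α) * ENNReal.ofReal (‖ξ - ζ'‖^(-((d:ℝ)+γ)))) ζ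
          = ({x : EuclideanSpace ℝ (Fin d) | R < ‖x‖}.indicator
            (fun x => ENNReal.ofReal (2^α) * ENNReal.ofReal (‖x‖^(-((d:ℝ)+γ))))) (ξ - ζ) := by
        intro ζ
        by_cases h : R < ‖ξ - ζ‖
        · have hmB : ζ ∈ {ζ' : EuclideanSpace ℝ (Fin d) | R < ‖ξ - ζ'‖} := h
          have hmB' : (ξ - ζ) ∈ {x : EuclideanSpace ℝ (Fin d) | R < ‖x‖} := h
          rw [indicator_of_mem hmB, indicator_of_mem hmB']
        · have hmB : ζ ∉ {ζ' : EuclideanSpace ℝ (Fin d) | R < ‖ξ - ζ'‖} := h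
          have hmB' : (ξ - ζ) ∉ {x : EuclideanSpace ℝ (Fin d) | R < ‖x‖} := h
          rw [indicator_of_notMem hmB, indicator_of_notMem hmB']
      simp_rw [hcomp]
      rw [(Measure.measurePreserving_sub_left volume ξ).lintegral_comp
        ((measurable_const.fun_mul (meas_rpow_norm _)).indicator
          (measurableSet_lt measurable_const measurable_norm))]
      rw [lintegral_indicator (measurableSet_lt measurable_const measurable_norm),
        lintegral_const_mul _ (meas_rpow_norm _), tail_eval (-((d:ℝ)+γ)) hR0, hγd, hRγ]
      ring
    calc (∫⁻ ζ, {ζ' : EuclideanSpace ℝ (Fin d) | R < ‖ξ - ζ'‖ ∧ R < ‖ζ'‖}.indicator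
          (fun ζ' => ENNReal.ofReal (2^α) *
            (ENNReal.ofReal (‖ζ'‖^(-((d:ℝ)+γ))) + ENNReal.ofReal (‖ξ - ζ'‖^(-((d:ℝ)+γ))))) ζ)
        ≤ ∫⁻ ζ, ({ζ' : EuclideanSpace ℝ (Fin d) | R < ‖ζ'‖}.indicator
            (fun ζ' => ENNReal.ofReal (2^α) * ENNReal.ofReal (‖ζ'‖^(-((d:ℝ)+γ)))) ζ
          + {ζ' : EuclideanSpace ℝ (Fin d) | R < ‖ξ - ζ'‖}.indicator
            (fun ζ' => ENNReal.ofReal (2^α) * ENNReal.ofReal (‖ξ - ζ'‖^(-((d:ℝ)+γ)))) ζ) :=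
          lintegral_mono hsplit
      _ = ENNReal.ofReal (s ^ (γ/k)) * (ENNReal.ofReal (2^α) * T)
          + ENNReal.ofReal (s ^ (γ/k)) * (ENNReal.ofReal (2^α) * T) := by
          rw [lintegral_add_left ((measurable_const.fun_mul (meas_rpow_norm _)).indicator hmsn),
            hA, hB]
      _ = ENNReal.ofReal (s ^ (γ/k)) * (ENNReal.ofReal (2^α) * (T + T)) := by ring
  -- assemble
  have hm1 : Measurable ({ζ' : EuclideanSpace ℝ (Fin d) | ‖ξ - ζ'‖ ≤ R ∧ ‖ζ'‖ ≤ R}.indicator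
      (fun ζ' => ENNReal.ofReal (2^α * R^(2*α) * s^(2:ℝ)) * ENNReal.ofReal (‖ζ'‖^(β-d)))) :=
    (measurable_const.mul (meas_rpow_norm _)).indicator hS1
  have hm2 : Measurable ({ζ' : EuclideanSpace ℝ (Fin d) | ‖ξ - ζ'‖ ≤ R ∧ R < ‖ζ'‖}.indicator
      (fun _ => ENNReal.ofReal (2^α * R^(2*α) * s^(2:ℝ)) * ENNReal.ofReal (R^(β-d)))) :=
    measurable_const.indicator hS2
  have hm3 : Measurable ({ζ' : EuclideanSpace ℝ (Fin d) | R < ‖ξ - ζ'‖ ∧ ‖ζ'‖ ≤ R}.indicator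
      (fun ζ' => ENNReal.ofReal (2^α * R^(-(γ+β))) * ENNReal.ofReal (‖ζ'‖^(β-d)))) :=
    (measurable_const.mul (meas_rpow_norm _)).indicator hS3
  calc (∫⁻ ζ : EuclideanSpace ℝ (Fin d), ENNReal.ofReal (‖ζ‖ ^ (β - d) * (1 + ‖ξ - ζ‖ ^ 2) ^ α *
          Real.sin (s * ‖ξ - ζ‖ ^ k) ^ 2 / ‖ξ - ζ‖ ^ (2 * k)))
      ≤ ∫⁻ ζ, ({ζ' : EuclideanSpace ℝ (Fin d) | ‖ξ - ζ'‖ ≤ R ∧ ‖ζ'‖ ≤ R}.indicator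
          (fun ζ' => ENNReal.ofReal (2^α * R^(2*α) * s^(2:ℝ)) * ENNReal.ofReal (‖ζ'‖^(β-d))) ζ
        + {ζ' : EuclideanSpace ℝ (Fin d) | ‖ξ - ζ'‖ ≤ R ∧ R < ‖ζ'‖}.indicator
          (fun _ => ENNReal.ofReal (2^α * R^(2*α) * s^(2:ℝ)) * ENNReal.ofReal (R^(β-d))) ζ
        + {ζ' : EuclideanSpace ℝ (Fin d) | R < ‖ξ - ζ'‖ ∧ ‖ζ'‖ ≤ R}.indicator
          (fun ζ' => ENNReal.ofReal (2^α * R^(-(γ+β))) * ENNReal.ofReal (‖ζ'‖^(β-d))) ζ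
        + {ζ' : EuclideanSpace ℝ (Fin d) | R < ‖ξ - ζ'‖ ∧ R < ‖ζ'‖}.indicator
          (fun ζ' => ENNReal.ofReal (2^α) *
            (ENNReal.ofReal (‖ζ'‖^(-((d:ℝ)+γ))) + ENNReal.ofReal (‖ξ - ζ'‖^(-((d:ℝ)+γ))))) ζ) :=
        lintegral_mono (fun ζ => pointwise_bound hk hα hβ0 hβd rfl hγβ hs hR1 ξ ζ)
    _ = (∫⁻ ζ, {ζ' : EuclideanSpace ℝ (Fin d) | ‖ξ - ζ'‖ ≤ R ∧ ‖ζ'‖ ≤ R}.indicator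
          (fun ζ' => ENNReal.ofReal (2^α * R^(2*α) * s^(2:ℝ)) * ENNReal.ofReal (‖ζ'‖^(β-d))) ζ)
        + (∫⁻ ζ, {ζ' : EuclideanSpace ℝ (Fin d) | ‖ξ - ζ'‖ ≤ R ∧ R < ‖ζ'‖}.indicator
          (fun _ => ENNReal.ofReal (2^α * R^(2*α) * s^(2:ℝ)) * ENNReal.ofReal (R^(β-d))) ζ)
        + (∫⁻ ζ, {ζ' : EuclideanSpace ℝ (Fin d) | R < ‖ξ - ζ'‖ ∧ ‖ζ'‖ ≤ R}.indicator
          (fun ζ' => ENNReal.ofReal (2^α * R^(-(γ+β))) * ENNReal.ofReal (‖ζ'‖^(β-d))) ζ)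
        + (∫⁻ ζ, {ζ' : EuclideanSpace ℝ (Fin d) | R < ‖ξ - ζ'‖ ∧ R < ‖ζ'‖}.indicator
          (fun ζ' => ENNReal.ofReal (2^α) *
            (ENNReal.ofReal (‖ζ'‖^(-((d:ℝ)+γ))) + ENNReal.ofReal (‖ξ - ζ'‖^(-((d:ℝ)+γ))))) ζ) := by
        rw [lintegral_add_left ((hm1.fun_add hm2).fun_add hm3), lintegral_add_left (hm1.fun_add hm2),
          lintegral_add_left hm1]
    _ ≤ ENNReal.ofReal (s ^ (γ/k)) * (ENNReal.ofReal (2^α) * J)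
        + ENNReal.ofReal (s ^ (γ/k)) * (ENNReal.ofReal (2^α) * V)
        + ENNReal.ofReal (s ^ (γ/k)) * (ENNReal.ofReal (2^α) * J)
        + ENNReal.ofReal (s ^ (γ/k)) * (ENNReal.ofReal (2^α) * (T + T)) :=
        add_le_add (add_le_add (add_le_add hI1 hI2) hI3) hI4
    _ = ENNReal.ofReal (s ^ (γ/k)) * (ENNReal.ofReal (2^α) * (J + V + J + (T + T))) := by ring

theorem stmt_9 (d : ℕ) (hd : 1 ≤ d) (k α β p : ℝ) (hk : 0 < k) (hα : 0 ≤ α)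
    (hβ0 : 0 < β) (hβd : β < d) (hβ : β < 2 * (k - α)) (hp : 1 ≤ p) :
    ∃ C : ℝ, ∀ h ∈ Set.Icc (0 : ℝ) 1,
      ∫⁻ s in Set.Ioc (0 : ℝ) h,
          (⨆ ξ : EuclideanSpace ℝ (Fin d),
            ∫⁻ ζ : EuclideanSpace ℝ (Fin d),
              ENNReal.ofReal (‖ζ‖ ^ (β - d) * (1 + ‖ξ - ζ‖ ^ 2) ^ α *
                Real.sin (s * ‖ξ - ζ‖ ^ k) ^ 2 / ‖ξ - ζ‖ ^ (2 * k))) ^ p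
        ≤ ENNReal.ofReal (C * h ^ (p * (2 - (β + 2 * α) / k) + 1)) := by
  obtain ⟨M, hMtop, hbound⟩ := main_bound d hk hα hβ0 hβd hβ
  set q : ℝ := p * (2 - (β + 2 * α) / k) with hqdef
  have hq0pos : 0 < 2 - (β + 2*α)/k := by
    have h1 : (β + 2*α)/k < 2 := by rw [div_lt_iff₀ hk]; linarith
    linarith
  have hppos : 0 < p := lt_of_lt_of_le one_pos hp
  have hp0 : (0:ℝ) ≤ p := hppos.le
  have hqpos : 0 < q := mul_pos hppos hq0pos
  have hg : (2*k - 2*α - β)/k = 2 - (β + 2*α)/k := by field_simp; ring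
  refine ⟨M.toReal ^ p / (q + 1), ?_⟩
  intro h hh
  obtain ⟨hh0, hh1⟩ := hh
  have hpt : ∀ s : ℝ, s ∈ Set.Ioc (0:ℝ) h →
      (⨆ ξ : EuclideanSpace ℝ (Fin d),
        ∫⁻ ζ : EuclideanSpace ℝ (Fin d),
          ENNReal.ofReal (‖ζ‖ ^ (β - d) * (1 + ‖ξ - ζ‖ ^ 2) ^ α *
            Real.sin (s * ‖ξ - ζ‖ ^ k) ^ 2 / ‖ξ - ζ‖ ^ (2 * k))) ^ p
      ≤ ENNReal.ofReal (M.toReal ^ p * s ^ q) := by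
    intro s hs
    have hs0 : 0 < s := hs.1
    have hs1 : s ≤ 1 := le_trans hs.2 hh1
    have hsup : (⨆ ξ : EuclideanSpace ℝ (Fin d),
        ∫⁻ ζ : EuclideanSpace ℝ (Fin d),
          ENNReal.ofReal (‖ζ‖ ^ (β - d) * (1 + ‖ξ - ζ‖ ^ 2) ^ α *
            Real.sin (s * ‖ξ - ζ‖ ^ k) ^ 2 / ‖ξ - ζ‖ ^ (2 * k)))
        ≤ ENNReal.ofReal (s ^ ((2*k - 2*α - β)/k)) * M :=
      iSup_le fun ξ => hbound s hs0 hs1 ξ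
    calc (⨆ ξ : EuclideanSpace ℝ (Fin d),
        ∫⁻ ζ : EuclideanSpace ℝ (Fin d),
          ENNReal.ofReal (‖ζ‖ ^ (β - d) * (1 + ‖ξ - ζ‖ ^ 2) ^ α *
            Real.sin (s * ‖ξ - ζ‖ ^ k) ^ 2 / ‖ξ - ζ‖ ^ (2 * k))) ^ p
        ≤ (ENNReal.ofReal (s ^ ((2*k - 2*α - β)/k)) * M) ^ p :=
          ENNReal.rpow_le_rpow hsup hp0
      _ = ENNReal.ofReal (M.toReal ^ p * s ^ q) := by
          have hMp : M ^ p = ENNReal.ofReal (M.toReal ^ p) := by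
            conv_lhs => rw [← ENNReal.ofReal_toReal hMtop]
            rw [ENNReal.ofReal_rpow_of_nonneg ENNReal.toReal_nonneg hp0]
          rw [ENNReal.mul_rpow_of_nonneg _ _ hp0, hMp,
            ENNReal.ofReal_rpow_of_nonneg (Real.rpow_nonneg hs0.le _) hp0,
            ← ENNReal.ofReal_mul (by positivity)]
          congr 1
          rw [← Real.rpow_mul hs0.le]
          have he : (2*k - 2*α - β)/k * p = q := by rw [hg, hqdef]; ring
          rw [he]
          ring
  calc ∫⁻ s in Set.Ioc (0 : ℝ) h,
          (⨆ ξ : EuclideanSpace ℝ (Fin d),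
            ∫⁻ ζ : EuclideanSpace ℝ (Fin d),
              ENNReal.ofReal (‖ζ‖ ^ (β - d) * (1 + ‖ξ - ζ‖ ^ 2) ^ α *
                Real.sin (s * ‖ξ - ζ‖ ^ k) ^ 2 / ‖ξ - ζ‖ ^ (2 * k))) ^ p
      ≤ ∫⁻ s in Set.Ioc (0 : ℝ) h, ENNReal.ofReal (M.toReal ^ p * s ^ q) :=
        setLIntegral_mono' measurableSet_Ioc hpt
    _ = ENNReal.ofReal (∫ s in Set.Ioc (0 : ℝ) h, M.toReal ^ p * s ^ q) := by
        rw [← ofReal_integral_eq_lintegral_ofReal (f := fun s => M.toReal ^ p * s ^ q)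
          ((continuous_const.mul (Real.continuous_rpow_const hqpos.le)).integrableOn_Ioc) ?_]
        filter_upwards [ae_restrict_mem measurableSet_Ioc] with s hs
        have hs0 : 0 < s := hs.1
        positivity
    _ ≤ ENNReal.ofReal (M.toReal ^ p / (q + 1) * h ^ (p * (2 - (β + 2 * α) / k) + 1)) := by
        apply ENNReal.ofReal_le_ofReal
        apply le_of_eq
        rw [integral_const_mul, ← intervalIntegral.integral_of_le hh0,
          integral_rpow (Or.inl (by linarith : (-1:ℝ) < q)),
          Real.zero_rpow (by linarith : q + 1 ≠ 0)]
        ring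


end Aux
end

section
/- Let k > 0, α ≥ 0, and 0 < β < d with β < 2(k − α). Then there is a finite constant C such that for every h ∈ (0,1] and every ξ ∈ ℝ^d, ∫_{{ζ : ‖ξ − ζ‖ > 1}} ‖ζ‖^{β−d} (1 + ‖ξ − ζ‖²)^{α} (sin((h/2)‖ξ − ζ‖^k))² / ‖ξ − ζ‖^{2k} dζ ≤ C h^{2 − (β + 2α)/k}. -/
open Real MeasureTheory

open Set Module Measure
open scoped ENNReal

/-! For `r = ‖ξ - ζ‖ ≥ 1` the multiplier is at most `2 ^ α * min (R ^ (-γ)) (r ^ (-γ))`, where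
`γ = 2 (k - α)` and `R = h ^ (-1 / k)`: combine `sin² x ≤ 1` with the interpolated bound
`sin² x ≤ |x| ^ (2 - 2α/k)`. The Riesz weight `a ^ (β - d)` and this bound are both
decreasing in the radius, so `φ(a) g(b) ≤ φ(a) g(a) + φ(b) g(b)`, and by translation invariance the
integral is at most twice `∫ ‖x‖ ^ (β - d) min (R ^ (-γ)) (‖x‖ ^ (-γ)) dx`. In polar coordinates this
equals `σ R ^ (β - γ) (1/β + 1/(γ - β))`, finite because `0 < β < γ`, and `R ^ (β - γ)` is exactly
`h ^ (2 - (β + 2α)/k)`. -/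

theorem lintegral_Ioc_zero_rpow {p b : ℝ} (hp : -1 < p) (hb : 0 ≤ b) :
    ∫⁻ r in Ioc 0 b, ENNReal.ofReal (r ^ p) = ENNReal.ofReal (b ^ (p + 1) / (p + 1)) := by
  rw [← ofReal_integral_eq_lintegral_ofReal
      ((intervalIntegrable_iff_integrableOn_Ioc_of_le hb).1
        (intervalIntegral.intervalIntegrable_rpow' hp))
      (ae_restrict_of_forall_mem measurableSet_Ioc fun r hr => rpow_nonneg hr.1.le p),
    ← intervalIntegral.integral_of_le hb, integral_rpow (Or.inl hp),
    zero_rpow (by linarith), sub_zero]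

theorem lintegral_Ioi_rpow {p c : ℝ} (hp : p < -1) (hc : 0 < c) :
    ∫⁻ r in Ioi c, ENNReal.ofReal (r ^ p) = ENNReal.ofReal (-c ^ (p + 1) / (p + 1)) := by
  rw [← ofReal_integral_eq_lintegral_ofReal (integrableOn_Ioi_rpow_of_lt hp hc)
      (ae_restrict_of_forall_mem measurableSet_Ioi fun r hr => rpow_nonneg (hc.trans hr).le p),
    integral_Ioi_rpow_of_lt hp hc]

theorem lintegral_Ioi_rpow_mul_min_rpow_neg {β γ R : ℝ} (hβ : 0 < β) (hβγ : β < γ) (hR : 0 < R) :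
    ∫⁻ r in Ioi 0, ENNReal.ofReal (r ^ (β - 1) * min (R ^ (-γ)) (r ^ (-γ)))
      = ENNReal.ofReal (R ^ (β - γ) * (1 / β + 1 / (γ - β))) := by
  have hinner : ∫⁻ r in Ioc 0 R, ENNReal.ofReal (r ^ (β - 1) * min (R ^ (-γ)) (r ^ (-γ)))
      = ENNReal.ofReal (R ^ (β - γ) / β) := by
    rw [setLIntegral_congr_fun measurableSet_Ioc fun r hr => by
        rw [min_eq_left (rpow_le_rpow_of_nonpos hr.1 hr.2 (by linarith)),
          ENNReal.ofReal_mul (rpow_nonneg hr.1.le _)],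
      lintegral_mul_const _ (by fun_prop), lintegral_Ioc_zero_rpow (by linarith) hR.le,
      sub_add_cancel, ← ENNReal.ofReal_mul (by positivity), div_mul_eq_mul_div,
      ← rpow_add hR, ← sub_eq_add_neg]
  have houter : ∫⁻ r in Ioi R, ENNReal.ofReal (r ^ (β - 1) * min (R ^ (-γ)) (r ^ (-γ)))
      = ENNReal.ofReal (R ^ (β - γ) / (γ - β)) := by
    rw [setLIntegral_congr_fun measurableSet_Ioi fun r hr => by
        rw [min_eq_right (rpow_le_rpow_of_nonpos hR hr.le (by linarith)),
          ← rpow_add (hR.trans hr)],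
      lintegral_Ioi_rpow (by linarith) hR]
    congr 1
    rw [neg_div, ← div_neg]
    ring_nf
  rw [← Ioc_union_Ioi_eq_Ioi hR.le, lintegral_union measurableSet_Ioi (Ioc_disjoint_Ioi le_rfl),
    hinner, houter, ← ENNReal.ofReal_add (by positivity) (div_nonneg (by positivity) (by linarith))]
  ring_nf

theorem AntitoneOn.mul_le_add {φ g : ℝ → ℝ} {s : Set ℝ} (hφ : AntitoneOn φ s) (hg : AntitoneOn g s)
    (hφ₀ : ∀ x ∈ s, 0 ≤ φ x) (hg₀ : ∀ x ∈ s, 0 ≤ g x) {a b : ℝ} (ha : a ∈ s) (hb : b ∈ s) :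
    φ a * g b ≤ φ a * g a + φ b * g b := by
  have := mul_nonneg (hφ₀ a ha) (hg₀ a ha)
  have := mul_nonneg (hφ₀ b hb) (hg₀ b hb)
  rcases le_total a b with hab | hab
  · nlinarith [mul_le_mul_of_nonneg_left (hg ha hb hab) (hφ₀ a ha)]
  · nlinarith [mul_le_mul_of_nonneg_right (hφ hb ha hab) (hg₀ b hb)]

section AddHaar

variable {E : Type*} [NormedAddCommGroup E] [NormedSpace ℝ E] [MeasurableSpace E] [BorelSpace E]
  [FiniteDimensional ℝ E] [Nontrivial E] (μ : Measure E) [μ.IsAddHaarMeasure]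

theorem lintegral_fun_norm_addHaar {f : ℝ → ℝ≥0∞} (hf : Measurable f) :
    ∫⁻ x, f ‖x‖ ∂μ
      = μ.toSphere univ * ∫⁻ r in Ioi 0, ENNReal.ofReal (r ^ (finrank ℝ E - 1)) * f r := by
  calc ∫⁻ x, f ‖x‖ ∂μ = ∫⁻ x : ({0}ᶜ : Set E), f ‖x.1‖ ∂μ.comap (↑) := by
        rw [lintegral_subtype_comap (measurableSet_singleton _).compl fun x => f ‖x‖,
          restrict_compl_singleton]
    _ = ∫⁻ x, f x.2 ∂μ.toSphere.prod (volumeIoiPow (finrank ℝ E - 1)) := by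
        simpa using μ.measurePreserving_homeomorphUnitSphereProd.lintegral_comp_emb
          (Homeomorph.measurableEmbedding _) (f ∘ Subtype.val ∘ Prod.snd)
    _ = μ.toSphere univ * ∫⁻ r, f r ∂volumeIoiPow (finrank ℝ E - 1) := by
        rw [lintegral_prod (fun z : Metric.sphere (0 : E) 1 × Ioi (0 : ℝ) => f z.2)
            (hf.comp (measurable_subtype_coe.comp measurable_snd)).aemeasurable]
        dsimp only
        rw [lintegral_const, mul_comm]
    _ = _ := by
        rw [volumeIoiPow, lintegral_withDensity_eq_lintegral_mul _ (by fun_prop)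
            (show Measurable fun r : Ioi (0 : ℝ) => f r from hf.comp measurable_subtype_coe),
          ← lintegral_subtype_comap measurableSet_Ioi]
        rfl

theorem lintegral_norm_rpow_mul_min_rpow_neg {β γ R : ℝ} (hβ : 0 < β)
    (hβγ : β < γ) (hR : 0 < R) :
    ∫⁻ x, ENNReal.ofReal (‖x‖ ^ (β - finrank ℝ E) * min (R ^ (-γ)) (‖x‖ ^ (-γ))) ∂μ
      = μ.toSphere univ * ENNReal.ofReal (R ^ (β - γ) * (1 / β + 1 / (γ - β))) := by
  rw [lintegral_fun_norm_addHaar μ (f := fun r => ENNReal.ofReal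
      (r ^ (β - finrank ℝ E) * min (R ^ (-γ)) (r ^ (-γ)))) (by fun_prop),
    ← lintegral_Ioi_rpow_mul_min_rpow_neg hβ hβγ hR]
  congr 1
  refine setLIntegral_congr_fun measurableSet_Ioi fun r (hr : 0 < r) => ?_
  rw [← ENNReal.ofReal_mul (by positivity), ← mul_assoc, ← rpow_natCast,
    Nat.cast_pred finrank_pos, ← rpow_add hr]
  ring_nf

theorem lintegral_norm_rpow_mul_min_rpow_neg_norm_sub_le {β γ R : ℝ}
    (hβd : β < finrank ℝ E) (hγ : 0 ≤ γ) (hR : 0 ≤ R) (ξ : E) :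
    ∫⁻ ζ, ENNReal.ofReal (‖ζ‖ ^ (β - finrank ℝ E) * min (R ^ (-γ)) (‖ξ - ζ‖ ^ (-γ))) ∂μ
      ≤ 2 * ∫⁻ x, ENNReal.ofReal (‖x‖ ^ (β - finrank ℝ E) * min (R ^ (-γ)) (‖x‖ ^ (-γ))) ∂μ := by
  set ψ : E → ℝ≥0∞ := fun x =>
    ENNReal.ofReal (‖x‖ ^ (β - finrank ℝ E) * min (R ^ (-γ)) (‖x‖ ^ (-γ)))
  have hψ : Measurable ψ := by fun_prop
  have hφ : AntitoneOn (fun r : ℝ => r ^ (β - finrank ℝ E)) (Ioi 0) :=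
    fun a ha b _ hab => rpow_le_rpow_of_nonpos ha hab (by linarith)
  have hg : AntitoneOn (fun r : ℝ => min (R ^ (-γ)) (r ^ (-γ))) (Ioi 0) :=
    fun a ha b _ hab => min_le_min_left _ (rpow_le_rpow_of_nonpos ha hab (by linarith))
  calc ∫⁻ ζ, ENNReal.ofReal (‖ζ‖ ^ (β - finrank ℝ E) * min (R ^ (-γ)) (‖ξ - ζ‖ ^ (-γ))) ∂μ
      ≤ ∫⁻ ζ, ψ ζ + ψ (ξ - ζ) ∂μ := by
        -- Off `ζ = 0` and `ζ = ξ`, where `0 ^ (-s) = 0` would break the monotonicity.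
        refine lintegral_mono_ae ?_
        filter_upwards [μ.ae_ne 0, μ.ae_ne ξ] with ζ hζ hξζ
        rw [← ENNReal.ofReal_add (by positivity) (by positivity)]
        exact ENNReal.ofReal_le_ofReal (hφ.mul_le_add hg (fun r hr => rpow_nonneg hr.le _)
          (fun r hr => le_min (rpow_nonneg hR _) (rpow_nonneg hr.le _))
          (norm_pos_iff.2 hζ) (norm_pos_iff.2 (sub_ne_zero.2 hξζ.symm)))
    _ = 2 * ∫⁻ x, ψ x ∂μ := by
        rw [lintegral_add_left hψ, lintegral_sub_left_eq_self ψ ξ, two_mul]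

end AddHaar

theorem abs_sin_le_abs_rpow (x : ℝ) {θ : ℝ} (hθ₀ : 0 ≤ θ) (hθ₁ : θ ≤ 1) : |sin x| ≤ |x| ^ θ := by
  rcases le_total |x| 1 with hx | hx
  · exact abs_sin_le_abs.trans (self_le_rpow_of_le_one (abs_nonneg x) hx hθ₁)
  · exact (abs_sin_le_one x).trans (one_le_rpow hx hθ₀)

theorem sin_sq_le_abs_rpow (x : ℝ) {θ : ℝ} (hθ₀ : 0 ≤ θ) (hθ₁ : θ ≤ 1) :
    sin x ^ 2 ≤ |x| ^ (2 * θ) := by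
  rw [← sq_abs, mul_comm, rpow_mul (abs_nonneg x)]
  exact_mod_cast pow_le_pow_left₀ (abs_nonneg _) (abs_sin_le_abs_rpow x hθ₀ hθ₁) 2

theorem one_add_sq_rpow_mul_sin_sq_div_le {k α h r : ℝ} (hk : 0 < k) (hα : 0 ≤ α) (hαk : α ≤ k)
    (hh : 0 ≤ h) (hr : 1 ≤ r) :
    (1 + r ^ 2) ^ α * sin ((h / 2) * r ^ k) ^ 2 / r ^ (2 * k)
      ≤ 2 ^ α * min (h ^ (2 - 2 * α / k)) (r ^ (-(2 * (k - α)))) := by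
  have hr₀ : 0 < r := one_pos.trans_le hr
  have hθ₀ : 0 ≤ 1 - α / k := sub_nonneg.2 ((div_le_one hk).2 hαk)
  have hθ₁ : 1 - α / k ≤ 1 := sub_le_self _ (div_nonneg hα hk.le)
  have hweight : (1 + r ^ 2) ^ α ≤ 2 ^ α * r ^ (2 * α) := by
    rw [rpow_mul hr₀.le, rpow_two, ← mul_rpow zero_le_two (sq_nonneg r)]
    exact rpow_le_rpow (by positivity) (by nlinarith) hα
  have hsplit : r ^ (2 * α) / r ^ (2 * k) = r ^ (-(2 * (k - α))) := by
    rw [← rpow_sub hr₀]; ring_nf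
  have hsin : r ^ (-(2 * (k - α))) * sin ((h / 2) * r ^ k) ^ 2 ≤ h ^ (2 - 2 * α / k) := by
    calc r ^ (-(2 * (k - α))) * sin ((h / 2) * r ^ k) ^ 2
        ≤ r ^ (-(2 * (k - α))) * |(h / 2) * r ^ k| ^ (2 * (1 - α / k)) := by
          gcongr; exact sin_sq_le_abs_rpow _ hθ₀ hθ₁
      _ = (h / 2) ^ (2 - 2 * α / k) := by
          have hexp : -(2 * (k - α)) + k * (2 * (1 - α / k)) = 0 := by field_simp; ring
          rw [abs_of_nonneg (by positivity), mul_rpow (by positivity) (by positivity),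
            ← rpow_mul hr₀.le, mul_left_comm, ← rpow_add hr₀, hexp, rpow_zero, mul_one]
          ring_nf
      _ ≤ h ^ (2 - 2 * α / k) := by
          gcongr
          · rw [mul_div_assoc]; linarith
          · linarith
  calc (1 + r ^ 2) ^ α * sin ((h / 2) * r ^ k) ^ 2 / r ^ (2 * k)
      ≤ 2 ^ α * r ^ (2 * α) * sin ((h / 2) * r ^ k) ^ 2 / r ^ (2 * k) := by gcongr
    _ = 2 ^ α * (r ^ (-(2 * (k - α))) * sin ((h / 2) * r ^ k) ^ 2) := by
      rw [← hsplit]; ring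
    _ ≤ 2 ^ α * min (h ^ (2 - 2 * α / k)) (r ^ (-(2 * (k - α)))) := by
      gcongr
      refine le_min hsin ?_
      exact mul_le_of_le_one_right (by positivity) (sin_sq_le_one _)

theorem stmt_10 (d : ℕ) (hd : 1 ≤ d) (k α β : ℝ) (hk : 0 < k) (hα : 0 ≤ α)
    (hβ0 : 0 < β) (hβd : β < d) (hβ : β < 2 * (k - α)) :
    ∃ C : ℝ, ∀ h ∈ Set.Ioc (0 : ℝ) 1, ∀ ξ : EuclideanSpace ℝ (Fin d),
      ∫⁻ ζ in {ζ : EuclideanSpace ℝ (Fin d) | 1 < ‖ξ - ζ‖},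
          ENNReal.ofReal (‖ζ‖ ^ (β - d) * (1 + ‖ξ - ζ‖ ^ 2) ^ α *
            Real.sin ((h / 2) * ‖ξ - ζ‖ ^ k) ^ 2 / ‖ξ - ζ‖ ^ (2 * k))
        ≤ ENNReal.ofReal (C * h ^ (2 - (β + 2 * α) / k)) := by
  have : Nonempty (Fin d) := ⟨⟨0, hd⟩⟩
  set γ := 2 * (k - α)
  set σ := (volume : Measure (EuclideanSpace ℝ (Fin d))).toSphere univ
  refine ⟨2 ^ α * 2 * σ.toReal * (1 / β + 1 / (γ - β)), ?_⟩
  rintro h ⟨hh₀, -⟩ ξ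
  set R := h ^ (-1 / k)
  have hR : 0 < R := rpow_pos_of_pos hh₀ _
  have hQ : h ^ (2 - 2 * α / k) = R ^ (-γ) := by
    rw [← rpow_mul hh₀.le]; congr 1; field_simp; ring
  have hRh : R ^ (β - γ) = h ^ (2 - (β + 2 * α) / k) := by
    rw [← rpow_mul hh₀.le]; congr 1; field_simp; ring
  have hriesz := lintegral_norm_rpow_mul_min_rpow_neg_norm_sub_le volume (γ := γ) (R := R)
    (by simpa using hβd) (by linarith) hR.le ξ
  rw [lintegral_norm_rpow_mul_min_rpow_neg volume hβ0 hβ hR, finrank_euclideanSpace_fin] at hriesz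
  calc _ ≤ ∫⁻ ζ in {ζ : EuclideanSpace ℝ (Fin d) | 1 < ‖ξ - ζ‖}, ENNReal.ofReal (2 ^ α) *
          ENNReal.ofReal (‖ζ‖ ^ (β - d) * min (R ^ (-γ)) (‖ξ - ζ‖ ^ (-γ))) := by
        refine setLIntegral_mono' (measurableSet_lt measurable_const (by fun_prop)) fun ζ hζ => ?_
        rw [← ENNReal.ofReal_mul (by positivity), ← hQ]
        refine ENNReal.ofReal_le_ofReal ?_
        rw [mul_assoc, mul_div_assoc, mul_left_comm (2 ^ α)]
        exact mul_le_mul_of_nonneg_left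
          (one_add_sq_rpow_mul_sin_sq_div_le hk hα (by linarith) hh₀.le hζ.le)
          (rpow_nonneg (norm_nonneg _) _)
    _ ≤ ENNReal.ofReal (2 ^ α) *
          (2 * (σ * ENNReal.ofReal (R ^ (β - γ) * (1 / β + 1 / (γ - β))))) := by
        rw [lintegral_const_mul' _ _ ENNReal.ofReal_ne_top]
        gcongr
        exact (setLIntegral_le_lintegral _ _).trans hriesz
    _ = _ := by
        rw [hRh, ENNReal.ofReal_mul (by positivity), ENNReal.ofReal_mul (by positivity),
          ENNReal.ofReal_mul (by positivity), ENNReal.ofReal_mul (by positivity),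
          ENNReal.ofReal_mul (by positivity), ENNReal.ofReal_toReal (measure_ne_top _ _),
          ENNReal.ofReal_ofNat]
        ring
end

section
/- Let 0 < t₁ ≤ t₂ and let a be a real number with a ≥ 2/t₁. Then ∫_0^{t₁} (sin((t₂ − s)a) − sin((t₁ − s)a))² ds ≥ t₁ · sin²((t₂ − t₁)a/2). -/
open Real intervalIntegral

theorem stmt_12 (t₁ t₂ a : ℝ) (ht₁ : 0 < t₁) (ht : t₁ ≤ t₂) (ha : 2 / t₁ ≤ a) :
    t₁ * Real.sin ((t₂ - t₁) * a / 2) ^ 2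
      ≤ ∫ s in (0 : ℝ)..t₁,
          (Real.sin ((t₂ - s) * a) - Real.sin ((t₁ - s) * a)) ^ 2 := by
  have ha0 : 0 < a := lt_of_lt_of_le (div_pos two_pos ht₁) ha
  set c := (t₂ - t₁) * a / 2 with hc
  have hfun : ∀ s : ℝ, (Real.sin ((t₂ - s) * a) - Real.sin ((t₁ - s) * a)) ^ 2
      = 2 * Real.sin c ^ 2 + 2 * Real.sin c ^ 2 * Real.cos (-(2*a) * s + (t₂ + t₁) * a) := by
    intro s
    rw [Real.sin_sub_sin]
    have h1 : ((t₂ - s) * a - (t₁ - s) * a) / 2 = c := by rw [hc]; ring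
    have h2 : ((t₂ - s) * a + (t₁ - s) * a) / 2 = (-(2*a) * s + (t₂ + t₁) * a) / 2 := by ring
    rw [h1, h2]
    have h3 : 2 * ((-(2*a) * s + (t₂ + t₁) * a) / 2) = -(2*a) * s + (t₂ + t₁) * a := by ring
    have h4 := Real.cos_sq ((-(2*a) * s + (t₂ + t₁) * a) / 2)
    rw [h3] at h4
    nlinarith [h4]
  simp only [hfun]
  have hint : IntervalIntegrable (fun s => 2 * Real.sin c ^ 2 * Real.cos (-(2*a) * s + (t₂ + t₁) * a)) MeasureTheory.volume 0 t₁ := by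
    apply Continuous.intervalIntegrable
    continuity
  rw [intervalIntegral.integral_add (intervalIntegrable_const) hint,
    intervalIntegral.integral_const, intervalIntegral.integral_const_mul]
  have hne : (-(2*a) : ℝ) ≠ 0 := neg_ne_zero.mpr (by positivity)
  have hJ : (∫ s in (0:ℝ)..t₁, Real.cos (-(2*a) * s + (t₂ + t₁) * a))
      = (-(2*a))⁻¹ * (Real.sin (-(2*a) * t₁ + (t₂ + t₁) * a) - Real.sin (-(2*a) * 0 + (t₂ + t₁) * a)) := by
    rw [intervalIntegral.integral_comp_mul_add Real.cos hne, integral_cos]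
    simp [smul_eq_mul]
  rw [hJ]
  have hs1 : Real.sin (-(2*a) * t₁ + (t₂ + t₁) * a) ≤ 1 := Real.sin_le_one _
  have hs2 : -1 ≤ Real.sin (-(2*a) * t₁ + (t₂ + t₁) * a) := Real.neg_one_le_sin _
  have hs3 : Real.sin (-(2*a) * 0 + (t₂ + t₁) * a) ≤ 1 := Real.sin_le_one _
  have hs4 : -1 ≤ Real.sin (-(2*a) * 0 + (t₂ + t₁) * a) := Real.neg_one_le_sin _
  have hsq : 0 ≤ Real.sin c ^ 2 := sq_nonneg _
  have hta : 2 ≤ t₁ * a := by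
    rw [div_le_iff₀ ht₁] at ha; linarith [ha]
  have hinv : (-(2*a))⁻¹ = -(1/(2*a)) := by
    rw [← one_div]; field_simp
  rw [hinv]
  simp only [smul_eq_mul, sub_zero]
  set u := 1 / (2 * a) with hudef
  have hu0 : 0 < u := by positivity
  have hu : u * (2 * a) = 1 := by rw [hudef]; field_simp
  nlinarith [mul_nonneg hsq hu0.le, mul_nonneg (mul_nonneg hsq hu0.le) ha0.le,
    mul_nonneg hsq (mul_nonneg hu0.le (by linarith : (0:ℝ) ≤ t₁ * a - 2))]
end

section
/- Let k > 0, α ≥ 0, δ ∈ (0,1], and 0 ≤ s ≤ t. Then for every measurable function g : ℝ^d → ℂ, ∫_{ℝ^d} (1 + ‖ξ‖²)^{α} (cos(t‖ξ‖^k) − cos(s‖ξ‖^k))² |g(ξ)|² dξ ≤ 4 (t − s)^{2δ} ∫_{ℝ^d} (1 + ‖ξ‖²)^{α + kδ} |g(ξ)|² dξ, both sides taking values in [0,∞]. (Taking g = 𝓕v₀, this gives the H^α_2 Hölder estimate ‖(d/dt)G(t)*v₀ − (d/ds)G(s)*v₀‖²_{H^α_2} ≤ 4(t−s)^{2δ}‖v₀‖²_{H^{kδ+α}_2}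 for the contribution of the initial position v₀.) -/
open Real MeasureTheory

private lemma cos_sq_bound (δ D : ℝ) (hδ : δ ∈ Set.Ioc (0 : ℝ) 1) (hD : 0 ≤ D)
    (A B : ℝ) (hAB : |A - B| ≤ D) :
    (Real.cos A - Real.cos B) ^ 2 ≤ 4 * D ^ (2 * δ) := by
  have hc2 : |Real.cos A - Real.cos B| ≤ 2 := by
    have h1 := Real.cos_le_one A
    have h2 := Real.cos_le_one B
    have h3 := Real.neg_one_le_cos A
    have h4 := Real.neg_one_le_cos B
    exact abs_le.mpr ⟨by linarith, by linarith⟩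
  have hcD : |Real.cos A - Real.cos B| ≤ D := by
    rw [Real.cos_sub_cos]
    have h1 := Real.abs_sin_le_one ((A + B) / 2)
    have h2 := Real.abs_sin_le_abs (x := (A - B) / 2)
    have h3 : |(A - B) / 2| = |A - B| / 2 := by rw [abs_div]; norm_num
    have h4 := abs_nonneg (Real.sin ((A + B) / 2))
    have h5 := abs_nonneg (Real.sin ((A - B) / 2))
    calc |-2 * Real.sin ((A + B) / 2) * Real.sin ((A - B) / 2)|
        = 2 * |Real.sin ((A + B) / 2)| * |Real.sin ((A - B) / 2)| := by
          rw [abs_mul, abs_mul]; norm_num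
      _ ≤ D := by rw [h3] at h2; nlinarith
  have hmin : min 1 D ≤ D ^ δ := by
    rcases le_or_gt 1 D with h | h
    · calc min 1 D ≤ 1 := min_le_left _ _
        _ ≤ D ^ δ := Real.one_le_rpow h (le_of_lt hδ.1)
    · rcases eq_or_lt_of_le hD with h0 | h0
      · simp [← h0, Real.zero_rpow (ne_of_gt hδ.1)]
      · calc min 1 D ≤ D := min_le_right _ _
          _ = D ^ (1:ℝ) := (Real.rpow_one D).symm
          _ ≤ D ^ δ := Real.rpow_le_rpow_of_exponent_ge h0 h.le hδ.2
  have hc : |Real.cos A - Real.cos B| ≤ 2 * D ^ δ := by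
    rcases le_total 1 D with h | h
    · have h1 : (1:ℝ) ≤ D ^ δ := Real.one_le_rpow h hδ.1.le
      nlinarith
    · have : min 1 D = D := min_eq_right h
      nlinarith [Real.rpow_nonneg hD δ, this ▸ hmin]
  have h1 : (Real.cos A - Real.cos B) ^ 2 = |Real.cos A - Real.cos B| ^ 2 := (sq_abs _).symm
  rw [h1]
  calc |Real.cos A - Real.cos B| ^ 2 ≤ (2 * D ^ δ) ^ 2 := by
        nlinarith [abs_nonneg (Real.cos A - Real.cos B)]
    _ = 4 * (D ^ δ) ^ 2 := by ring
    _ = 4 * D ^ (2 * δ) := by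
        rw [← Real.rpow_natCast (D ^ δ) 2, ← Real.rpow_mul hD]
        norm_num [mul_comm]

private lemma pointwise (k α δ s t r : ℝ) (hk : 0 < k) (hα : 0 ≤ α)
    (hδ : δ ∈ Set.Ioc (0 : ℝ) 1) (hs : 0 ≤ s) (hst : s ≤ t) (hr : 0 ≤ r) :
    (1 + r ^ 2) ^ α * (Real.cos (t * r ^ k) - Real.cos (s * r ^ k)) ^ 2 ≤
      4 * (t - s) ^ (2 * δ) * (1 + r ^ 2) ^ (α + k * δ) := by
  have hb : (0:ℝ) < 1 + r ^ 2 := by positivity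
  have hkδ : 0 ≤ k * δ := mul_nonneg hk.le hδ.1.le
  have hD : 0 ≤ (t - s) * r ^ k := by
    have := Real.rpow_nonneg hr k
    nlinarith
  have hcos := cos_sq_bound δ ((t - s) * r ^ k) hδ hD (t * r ^ k) (s * r ^ k)
    (by rw [← sub_mul, abs_of_nonneg hD])
  have hkey : (r ^ k) ^ (2 * δ) ≤ (1 + r ^ 2) ^ (k * δ) := by
    have hL : (r ^ k) ^ (2 * δ) = (r ^ (2:ℝ)) ^ (k * δ) := by
      rw [← Real.rpow_mul hr, ← Real.rpow_mul hr]; ring_nf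
    rw [hL]
    have h2 : r ^ (2:ℝ) = r ^ 2 := by
      rw [← Real.rpow_natCast r 2]; norm_num
    rw [h2]
    exact Real.rpow_le_rpow (by positivity) (by nlinarith) hkδ
  have hDpow : ((t - s) * r ^ k) ^ (2 * δ) ≤ (t - s) ^ (2 * δ) * (1 + r ^ 2) ^ (k * δ) := by
    rw [Real.mul_rpow (by linarith) (Real.rpow_nonneg hr k)]
    exact mul_le_mul_of_nonneg_left hkey (Real.rpow_nonneg (by linarith) _)
  calc (1 + r ^ 2) ^ α * (Real.cos (t * r ^ k) - Real.cos (s * r ^ k)) ^ 2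
      ≤ (1 + r ^ 2) ^ α * (4 * ((t - s) * r ^ k) ^ (2 * δ)) :=
        mul_le_mul_of_nonneg_left hcos (Real.rpow_nonneg hb.le α)
    _ ≤ (1 + r ^ 2) ^ α * (4 * ((t - s) ^ (2 * δ) * (1 + r ^ 2) ^ (k * δ))) := by
        have := Real.rpow_nonneg hb.le α
        nlinarith [hDpow]
    _ = 4 * (t - s) ^ (2 * δ) * (1 + r ^ 2) ^ (α + k * δ) := by
        rw [Real.rpow_add hb]; ring

theorem stmt_15 (d : ℕ) (hd : 1 ≤ d) (k α δ s t : ℝ) (hk : 0 < k) (hα : 0 ≤ α)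
    (hδ : δ ∈ Set.Ioc (0 : ℝ) 1) (hs : 0 ≤ s) (hst : s ≤ t)
    (g : EuclideanSpace ℝ (Fin d) → ℂ) (hg : Measurable g) :
    ∫⁻ ξ : EuclideanSpace ℝ (Fin d),
        ENNReal.ofReal ((1 + ‖ξ‖ ^ 2) ^ α *
          (Real.cos (t * ‖ξ‖ ^ k) - Real.cos (s * ‖ξ‖ ^ k)) ^ 2 * ‖g ξ‖ ^ 2)
      ≤ ENNReal.ofReal (4 * (t - s) ^ (2 * δ)) *
        ∫⁻ ξ : EuclideanSpace ℝ (Fin d),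
          ENNReal.ofReal ((1 + ‖ξ‖ ^ 2) ^ (α + k * δ) * ‖g ξ‖ ^ 2) := by
  rw [← lintegral_const_mul' _ _ ENNReal.ofReal_ne_top]
  refine lintegral_mono fun ξ => ?_
  dsimp only
  rw [← ENNReal.ofReal_mul (mul_nonneg (by norm_num) (Real.rpow_nonneg (by linarith) _))]
  apply ENNReal.ofReal_le_ofReal
  have hpw := pointwise k α δ s t ‖ξ‖ hk hα hδ hs hst (norm_nonneg ξ)
  have hg2 : (0:ℝ) ≤ ‖g ξ‖ ^ 2 := by positivity
  calc (1 + ‖ξ‖ ^ 2) ^ α * (Real.cos (t * ‖ξ‖ ^ k) - Real.cos (s * ‖ξ‖ ^ k)) ^ 2 * ‖g ξ‖ ^ 2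
      ≤ 4 * (t - s) ^ (2 * δ) * (1 + ‖ξ‖ ^ 2) ^ (α + k * δ) * ‖g ξ‖ ^ 2 :=
        mul_le_mul_of_nonneg_right hpw hg2
    _ = 4 * (t - s) ^ (2 * δ) * ((1 + ‖ξ‖ ^ 2) ^ (α + k * δ) * ‖g ξ‖ ^ 2) := by ring
end

section
/- Let k > 0, α ≥ 0, γ ∈ [0,1) and T > 0. Then there is a finite constant C (depending only on k, γ, α, T) such that for all 0 ≤ s ≤ t ≤ T and every measurable function g : ℝ^d → ℂ, ∫_{ℝ^d} (1 + ‖ξ‖²)^{α} (sin(t‖ξ‖^k) − sin(s‖ξ‖^k))² / ‖ξ‖^{2k} |g(ξ)|² dξ ≤ C (t − s)^{2(1−γ)} ∫_{ℝ^d} (1 + ‖ξ‖²)^{α − kγ} |g(ξ)|² dξ, both sides taking values in [0,∞]. (Taking g = 𝓕ṽ₀, this gives the H^α_2 Hölder estimate ‖G(t)*ṽ₀ − G(s)*ṽ₀‖²_{H^α_2} ≤ C(t−s)^{2(1−γ)}‖ṽ₀‖²_{H^{−(kγ−α)}_2} for the contribution of the initial velocity ṽ₀.) -/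
/-!
Write `u = ‖ξ‖ ^ k` and `D = sin (t u) - sin (s u)`. Since `sin` is 1-Lipschitz and bounded by 1,
`D² ≤ (t - s)² u²` and `D² ≤ 4`; combining the first bound for `‖ξ‖ ≤ 1` with the second for
`‖ξ‖ ≥ 1` gives `D² (1 + ‖ξ‖²) ^ k ≲ u²`. Interpolating between `D² ≲ (t - s)² u²` and this with
weights `1 - γ` and `γ` gives `D² (1 + ‖ξ‖²) ^ (k γ) ≲ (t - s) ^ (2 (1 - γ)) u²`, a pointwise bound
on the integrands.
-/

open Real MeasureTheory

lemma mul_rpow_le_of_le_mul_of_mul_le {M B a c x γ : ℝ} (hM : 0 ≤ M) (hB : 0 ≤ B) (ha : 0 ≤ a)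
    (hc : 0 ≤ c) (hx : 0 ≤ x) (hγ₀ : 0 ≤ γ) (hγ₁ : γ ≤ 1) (hMa : M ≤ a * x)
    (hMB : M * B ≤ c * x) :
    M * B ^ γ ≤ a ^ (1 - γ) * c ^ γ * x := by
  have split : ∀ y : ℝ, 0 ≤ y → y = y ^ (1 - γ) * y ^ γ := fun y hy => by
    rw [← rpow_add' hy (by norm_num), sub_add_cancel, rpow_one]
  calc M * B ^ γ = M ^ (1 - γ) * (M * B) ^ γ := by
        rw [mul_rpow hM hB, ← mul_assoc, ← split M hM]
    _ ≤ (a * x) ^ (1 - γ) * (c * x) ^ γ := by gcongr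
    _ = a ^ (1 - γ) * c ^ γ * x := by
        rw [mul_rpow ha hx, mul_rpow hc hx]
        linear_combination (a ^ (1 - γ) * c ^ γ) * (split x hx).symm

lemma sq_sin_sub_sin_le_sq_sub (x y : ℝ) : (sin x - sin y) ^ 2 ≤ (x - y) ^ 2 :=
  sq_le_sq.mpr (abs_sin_sub_sin_le x y)

lemma sq_sin_sub_sin_le_four (x y : ℝ) : (sin x - sin y) ^ 2 ≤ 4 := by
  nlinarith [neg_one_le_sin x, sin_le_one x, neg_one_le_sin y, sin_le_one y]

lemma sq_sin_mul_sub_sin_mul_le (s t u : ℝ) :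
    (sin (t * u) - sin (s * u)) ^ 2 ≤ (t - s) ^ 2 * u ^ 2 := by
  simpa only [← sub_mul, mul_pow] using sq_sin_sub_sin_le_sq_sub (t * u) (s * u)

lemma sq_sin_sub_sin_mul_one_add_sq_rpow_le {k s t T r : ℝ} (hk : 0 ≤ k) (hst : s ≤ t)
    (htsT : t - s ≤ T) (hr : 0 ≤ r) :
    (sin (t * r ^ k) - sin (s * r ^ k)) ^ 2 * (1 + r ^ 2) ^ k
      ≤ 2 ^ k * (T ^ 2 + 4) * (r ^ k) ^ 2 := by
  rcases le_total r 1 with hr₁ | hr₁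
  · have hts : (t - s) ^ 2 ≤ T ^ 2 := pow_le_pow_left₀ (by linarith) htsT 2
    have hP : (1 + r ^ 2) ^ k ≤ 2 ^ k := rpow_le_rpow (by positivity) (by nlinarith) hk
    calc _ ≤ T ^ 2 * (r ^ k) ^ 2 * 2 ^ k := by
          gcongr
          exact (sq_sin_mul_sub_sin_mul_le s t _).trans (by gcongr)
      _ ≤ 2 ^ k * (T ^ 2 + 4) * (r ^ k) ^ 2 := by
        nlinarith [show 0 ≤ 2 ^ k * (r ^ k) ^ 2 by positivity]
  · have hP : (1 + r ^ 2) ^ k ≤ 2 ^ k * (r ^ k) ^ 2 := by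
      calc (1 + r ^ 2) ^ k ≤ (2 * r ^ 2) ^ k := rpow_le_rpow (by positivity) (by nlinarith) hk
        _ = 2 ^ k * (r ^ k) ^ 2 := by
          rw [mul_rpow zero_le_two (by positivity), ← rpow_natCast, ← rpow_natCast,
            ← rpow_mul hr, ← rpow_mul hr]
          ring_nf
    calc _ ≤ 4 * (2 ^ k * (r ^ k) ^ 2) := by
          gcongr
          exact sq_sin_sub_sin_le_four _ _
      _ ≤ 2 ^ k * (T ^ 2 + 4) * (r ^ k) ^ 2 := by
        nlinarith [show 0 ≤ 2 ^ k * (r ^ k) ^ 2 by positivity, sq_nonneg T]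

lemma one_add_sq_rpow_mul_sq_sin_sub_sin_div_le {k α γ s t T r : ℝ} (hk : 0 ≤ k)
    (hγ₀ : 0 ≤ γ) (hγ₁ : γ ≤ 1) (hst : s ≤ t) (htsT : t - s ≤ T) (hr : 0 ≤ r) :
    (1 + r ^ 2) ^ α * (sin (t * r ^ k) - sin (s * r ^ k)) ^ 2 / r ^ (2 * k)
      ≤ (2 ^ k * (T ^ 2 + 4)) ^ γ * (t - s) ^ (2 * (1 - γ)) * (1 + r ^ 2) ^ (α - k * γ) := by
  set u := r ^ k
  set D := sin (t * u) - sin (s * u)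
  have hP : 0 < 1 + r ^ 2 := by positivity
  have hts : 0 ≤ t - s := by linarith
  have key : D ^ 2 * (1 + r ^ 2) ^ (k * γ)
      ≤ (2 ^ k * (T ^ 2 + 4)) ^ γ * (t - s) ^ (2 * (1 - γ)) * u ^ 2 := by
    have interp := mul_rpow_le_of_le_mul_of_mul_le (sq_nonneg _) (rpow_nonneg hP.le k)
      (sq_nonneg _) (by positivity) (sq_nonneg _) hγ₀ hγ₁ (sq_sin_mul_sub_sin_mul_le s t u)
      (sq_sin_sub_sin_mul_one_add_sq_rpow_le hk hst htsT hr)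
    rw [rpow_mul hP.le, rpow_mul hts, rpow_two]
    linarith
  have hu2 : r ^ (2 * k) = u ^ 2 := by rw [mul_comm, rpow_mul hr, rpow_two]
  rw [hu2, rpow_sub hP]
  refine div_le_of_le_mul₀ (sq_nonneg u) (by positivity) ?_
  calc (1 + r ^ 2) ^ α * D ^ 2
      ≤ (1 + r ^ 2) ^ α * ((2 ^ k * (T ^ 2 + 4)) ^ γ * (t - s) ^ (2 * (1 - γ)) * u ^ 2
          / (1 + r ^ 2) ^ (k * γ)) := by
        gcongr
        exact (le_div_iff₀ (by positivity)).mpr key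
    _ = _ := by ring

theorem stmt_16_general (d : ℕ) (k α γ T : ℝ) (hk : 0 < k)
    (hγ : γ ∈ Set.Ico (0 : ℝ) 1) :
    ∃ C : ℝ, ∀ s t : ℝ, 0 ≤ s → s ≤ t → t ≤ T →
      ∀ g : EuclideanSpace ℝ (Fin d) → ℂ, Measurable g →
        ∫⁻ ξ : EuclideanSpace ℝ (Fin d),
            ENNReal.ofReal ((1 + ‖ξ‖ ^ 2) ^ α *
              (Real.sin (t * ‖ξ‖ ^ k) - Real.sin (s * ‖ξ‖ ^ k)) ^ 2 / ‖ξ‖ ^ (2 * k) *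
                ‖g ξ‖ ^ 2)
          ≤ ENNReal.ofReal (C * (t - s) ^ (2 * (1 - γ))) *
            ∫⁻ ξ : EuclideanSpace ℝ (Fin d),
              ENNReal.ofReal ((1 + ‖ξ‖ ^ 2) ^ (α - k * γ) * ‖g ξ‖ ^ 2) := by
  refine ⟨(2 ^ k * (T ^ 2 + 4)) ^ γ, fun s t hs hst htT g _ => ?_⟩
  rw [← lintegral_const_mul' _ _ ENNReal.ofReal_ne_top]
  refine lintegral_mono fun ξ => ?_
  rw [← ENNReal.ofReal_mul (by positivity), ← mul_assoc]
  refine ENNReal.ofReal_le_ofReal (mul_le_mul_of_nonneg_right ?_ (by positivity))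
  exact one_add_sq_rpow_mul_sq_sin_sub_sin_div_le hk.le hγ.1 hγ.2.le hst (by linarith)
    (norm_nonneg ξ)

theorem stmt_16 (d : ℕ) (hd : 1 ≤ d) (k α γ T : ℝ) (hk : 0 < k) (hα : 0 ≤ α)
    (hγ : γ ∈ Set.Ico (0 : ℝ) 1) (hT : 0 < T) :
    ∃ C : ℝ, ∀ s t : ℝ, 0 ≤ s → s ≤ t → t ≤ T →
      ∀ g : EuclideanSpace ℝ (Fin d) → ℂ, Measurable g →
        ∫⁻ ξ : EuclideanSpace ℝ (Fin d),
            ENNReal.ofReal ((1 + ‖ξ‖ ^ 2) ^ α *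
              (Real.sin (t * ‖ξ‖ ^ k) - Real.sin (s * ‖ξ‖ ^ k)) ^ 2 / ‖ξ‖ ^ (2 * k) *
                ‖g ξ‖ ^ 2)
          ≤ ENNReal.ofReal (C * (t - s) ^ (2 * (1 - γ))) *
            ∫⁻ ξ : EuclideanSpace ℝ (Fin d),
              ENNReal.ofReal ((1 + ‖ξ‖ ^ 2) ^ (α - k * γ) * ‖g ξ‖ ^ 2) :=
  stmt_16_general d k α γ T hk hγ
end
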